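/- arXiv:0804.0687 — 4 statements merged into one kernel-verified Lean document; each statement's English description precedes it below -/
import Mathlib

section
/- Let G be a finite group of order n > 1, and let δ be a positive real number such that every nontrivial irreducible complex representation of G has dimension at least δ. Then every product-free subset S of G satisfies |S| ≤ n/δ^(1/3). -/
open CategoryTheory Finset
variable {G : Type} [Group G] [Fintype G] [DecidableEq G]

noncomputable def subRep {W : Type} [AddCommGroup W] [Module ℂ W] (ρ : Representation ℂ G W)
    (p : Submodule ℂ W) (hp : ∀ g, ∀ v ∈ p, ρ g v ∈ p) : Representation ℂ G p where
  toFun g := (ρ g).restrict (fun v hv => hp g v hv)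
  map_one' := by ext v; simp
  map_mul' g h := by ext v; simp

theorem simple_of_subrep {W : Type} [AddCommGroup W] [Module ℂ W] [FiniteDimensional ℂ W]
    [Nontrivial W] (ρ : Representation ℂ G W)
    (h : ∀ p : Submodule ℂ W, (∀ g, ∀ v ∈ p, ρ g v ∈ p) → p = ⊥ ∨ p = ⊤) :
    Simple (FDRep.of ρ) := by
  constructor
  intro Y f hmono
  constructor
  · intro hiso hf0
    obtain ⟨w, hw⟩ := exists_ne (0 : W)
    apply hw
    have h1 : inv f ≫ f = 𝟙 (FDRep.of ρ) := IsIso.inv_hom_id f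
    subst hf0
    have h2 := congrFun (congrArg (fun z : FDRep.of ρ ⟶ FDRep.of ρ => DFunLike.coe (Action.Hom.hom z).hom.hom) h1.symm) w
    simpa using h2
  · intro hf
    have hKinv : ∀ g, ∀ v ∈ LinearMap.ker f.hom.hom.hom, Y.ρ g v ∈ LinearMap.ker f.hom.hom.hom := by
      intro g v hv
      have hc := LinearMap.congr_fun (congrArg (fun z : Y.V ⟶ (FDRep.of ρ).V => z.hom.hom) (f.comm g)) v
      simp only [LinearMap.mem_ker] at hv ⊢
      show f.hom.hom.hom (Y.ρ g v) = 0
      have : f.hom.hom.hom (Y.ρ g v) = ρ g (f.hom.hom.hom v) := hc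
      rw [this, hv, map_zero]
    have hinj : Function.Injective f.hom.hom.hom := by
      set K := LinearMap.ker f.hom.hom.hom with hK
      let ι : FDRep.of (subRep Y.ρ K hKinv) ⟶ Y :=
        ⟨FGModuleCat.ofHom K.subtype, by intro g; ext v; rfl⟩
      have hι : ι ≫ f = (0 : FDRep.of (subRep Y.ρ K hKinv) ⟶ Y) ≫ f := by
        apply Action.Hom.ext
        ext v
        show f.hom.hom.hom (K.subtype v) = f.hom.hom.hom ((0 : FDRep.of (subRep Y.ρ K hKinv) ⟶ Y).hom.hom.hom v)
        rw [Action.zero_hom]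
        have hv : f.hom.hom.hom v.1 = 0 := v.2
        rw [show K.subtype v = v.1 from rfl, hv]
        exact (map_zero f.hom.hom.hom).symm
      have hι0 : ι = 0 := Mono.right_cancellation _ _ hι
      rw [← LinearMap.ker_eq_bot, ← hK, eq_bot_iff]
      intro v hv
      have h3 : ι.hom.hom.hom ⟨v, hv⟩ = (0 : FDRep.of (subRep Y.ρ K hKinv) ⟶ Y).hom.hom.hom ⟨v, hv⟩ := by
        rw [hι0]
      have h4 : v = _ := h3
      simpa using h4
    have hRinv : ∀ g, ∀ w ∈ LinearMap.range f.hom.hom.hom, ρ g w ∈ LinearMap.range f.hom.hom.hom := by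
      rintro g w ⟨v, rfl⟩
      exact ⟨Y.ρ g v, (LinearMap.congr_fun (congrArg (fun z : Y.V ⟶ (FDRep.of ρ).V => z.hom.hom) (f.comm g)) v)⟩
    have hsur : Function.Surjective f.hom.hom.hom := by
      rw [← LinearMap.range_eq_top]
      rcases h (LinearMap.range f.hom.hom.hom) hRinv with h0 | h1
      · exfalso; apply hf
        apply Action.Hom.ext
        ext v
        have : f.hom.hom.hom v ∈ LinearMap.range f.hom.hom.hom := ⟨v, rfl⟩
        rw [h0] at this
        simpa using this
      · exact h1
    let e : Y.V ≃ₗ[ℂ] W := LinearEquiv.ofBijective f.hom.hom.hom ⟨hinj, hsur⟩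
    refine ⟨⟨⟨FGModuleCat.ofHom (e.symm : W →ₗ[ℂ] Y.V), ?_⟩, ?_, ?_⟩⟩
    · intro g
      ext w
      apply hinj
      show f.hom.hom.hom (e.symm ((FDRep.of ρ).ρ g w)) = f.hom.hom.hom (Y.ρ g (e.symm w))
      have h1 : ∀ v, f.hom.hom.hom (Y.ρ g v) = ρ g (f.hom.hom.hom v) := fun v => LinearMap.congr_fun (congrArg (fun z : Y.V ⟶ (FDRep.of ρ).V => z.hom.hom) (f.comm g)) v
      have h2 : ∀ w, f.hom.hom.hom (e.symm w) = w := fun w => e.apply_symm_apply w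
      rw [h1, h2, h2]
      rfl
    · apply Action.Hom.ext; ext v; exact e.symm_apply_apply v
    · apply Action.Hom.ext; ext w; exact e.apply_symm_apply w

theorem delta_le_finrank {W : Type} [AddCommGroup W] [Module ℂ W] [FiniteDimensional ℂ W]
    (ρ : Representation ℂ G W) (δ : ℝ)
    (hrep : ∀ V : FDRep ℂ G, CategoryTheory.Simple V →
      (∃ (g : G) (v : V), V.ρ g v ≠ v) → δ ≤ Module.finrank ℂ V)
    (p : Submodule ℂ W) (hinv : ∀ g, ∀ v ∈ p, ρ g v ∈ p) (hbot : p ≠ ⊥)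
    (hfix : ∀ v ∈ p, (∀ g, ρ g v = v) → v = 0) :
    δ ≤ Module.finrank ℂ p := by
  suffices h : ∀ k (p : Submodule ℂ W), Module.finrank ℂ p ≤ k →
      (∀ g, ∀ v ∈ p, ρ g v ∈ p) → p ≠ ⊥ →
      (∀ v ∈ p, (∀ g, ρ g v = v) → v = 0) → δ ≤ Module.finrank ℂ p from
    h (Module.finrank ℂ p) p le_rfl hinv hbot hfix
  clear hinv hbot hfix p
  intro k
  induction k with
  | zero =>
    intro p hk hinv hbot hfix
    exact absurd (Submodule.finrank_eq_zero.mp (Nat.le_zero.mp hk)) hbot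
  | succ k ih =>
    intro p hk hinv hbot hfix
    have hnt : Nontrivial p := Submodule.nontrivial_iff_ne_bot.mpr hbot
    by_cases hs : Simple (FDRep.of (subRep ρ p hinv))
    · -- apply hrep
      have hne : ∃ (g : G) (v : FDRep.of (subRep ρ p hinv)), (FDRep.of (subRep ρ p hinv)).ρ g v ≠ v := by
        by_contra hc
        push_neg at hc
        obtain ⟨v, hv⟩ := exists_ne (0 : p)
        apply hv
        have : (v : W) = 0 := by
          apply hfix v v.2
          intro g
          have := hc g v
          exact congrArg Subtype.val this
        exact Subtype.ext this
      exact hrep _ hs hne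
    · -- find proper nonzero invariant submodule
      have hq : ∃ q : Submodule ℂ p, (∀ g, ∀ v ∈ q, (subRep ρ p hinv) g v ∈ q) ∧ q ≠ ⊥ ∧ q ≠ ⊤ := by
        by_contra hc
        push_neg at hc
        apply hs
        apply simple_of_subrep
        intro q hqinv
        by_cases hq0 : q = ⊥
        · exact Or.inl hq0
        · exact Or.inr (hc q hqinv hq0)
      obtain ⟨q, hqinv, hqbot, hqtop⟩ := hq
      let q' : Submodule ℂ W := q.map p.subtype
      have hq'le : q' ≤ p := by
        rintro x ⟨y, _, rfl⟩
        exact y.2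
      have hq'inv : ∀ g, ∀ v ∈ q', ρ g v ∈ q' := by
        rintro g v ⟨y, hy, rfl⟩
        exact ⟨(subRep ρ p hinv) g y, hqinv g y hy, rfl⟩
      have hq'bot : q' ≠ ⊥ := by
        intro hB
        apply hqbot
        rw [eq_bot_iff]
        intro y hy
        have : (y : W) ∈ q' := ⟨y, hy, rfl⟩
        rw [hB] at this
        rw [Submodule.mem_bot] at this
        exact Subtype.ext this
      have hrank : Module.finrank ℂ q' < Module.finrank ℂ p := by
        have h1 : Module.finrank ℂ q' = Module.finrank ℂ q := by
          rw [Submodule.finrank_map_subtype_eq]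
        rw [h1]
        exact Submodule.finrank_lt (K := ℂ) (V := p) hqtop
      have hle : Module.finrank ℂ q' ≤ k := by omega
      have := ih q' hle hq'inv hq'bot (fun v hv => hfix v (hq'le hv))
      calc δ ≤ (Module.finrank ℂ q' : ℝ) := this
        _ ≤ _ := by exact_mod_cast (Submodule.finrank_mono hq'le)


open scoped ComplexConjugate

local notation "⟪" x ", " y "⟫" => @inner ℂ _ _ x y

abbrev Vsp (G : Type) [Fintype G] := EuclideanSpace ℂ G

/-- right regular representation -/
noncomputable def rRep (G : Type) [Group G] [Fintype G] : Representation ℂ G (Vsp G) where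
  toFun g := { toFun := fun f => (WithLp.toLp 2 (fun x => f (x * g)) : Vsp G)
               map_add' := fun f h => rfl
               map_smul' := fun c f => rfl }
  map_one' := by ext f x; show f (x * 1) = f x; rw [mul_one]
  map_mul' g h := by ext f x; show f (x * (g * h)) = f (x * g * h); rw [mul_assoc]

/-- convolution operator -/
noncomputable def Mop (S : Finset G) : Vsp G →ₗ[ℂ] Vsp G where
  toFun f := (WithLp.toLp 2 (fun x => ∑ s ∈ S, f (s⁻¹ * x)) : Vsp G)
  map_add' f h := by ext x; exact Finset.sum_add_distrib
  map_smul' c f := by ext x; simp [Finset.mul_sum]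

noncomputable def Mop' (S : Finset G) : Vsp G →ₗ[ℂ] Vsp G where
  toFun f := (WithLp.toLp 2 (fun x => ∑ s ∈ S, f (s * x)) : Vsp G)
  map_add' f h := by ext x; exact Finset.sum_add_distrib
  map_smul' c f := by ext x; simp [Finset.mul_sum]

theorem inner_apply' (f g : Vsp G) : ⟪f, g⟫ = ∑ x, conj (f x) * g x := by
  rw [PiLp.inner_apply]; exact Finset.sum_congr rfl fun x _ => RCLike.inner_apply' _ _

theorem pairing (S : Finset G) (u v : Vsp G) : ⟪Mop' S u, v⟫ = ⟪u, Mop S v⟫ := by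
  rw [inner_apply', inner_apply']
  simp only [Mop, Mop', LinearMap.coe_mk, AddHom.coe_mk]
  calc ∑ x, conj (∑ s ∈ S, u (s * x)) * v x
      = ∑ x, ∑ s ∈ S, conj (u (s * x)) * v x := by
        refine Finset.sum_congr rfl fun x _ => ?_
        rw [map_sum, Finset.sum_mul]
    _ = ∑ s ∈ S, ∑ x, conj (u (s * x)) * v x := Finset.sum_comm
    _ = ∑ s ∈ S, ∑ x, conj (u x) * v (s⁻¹ * x) := by
        refine Finset.sum_congr rfl fun s _ => ?_
        refine Fintype.sum_equiv (Equiv.mulLeft s) _ _ fun x => ?_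
        simp only [Equiv.coe_mulLeft]
        exact congrArg (fun y => conj (u (s * x)) * v y) (inv_mul_cancel_left s x).symm
    _ = ∑ x, conj (u x) * ∑ s ∈ S, v (s⁻¹ * x) := by
        rw [Finset.sum_comm]
        exact Finset.sum_congr rfl fun x _ => (Finset.mul_sum _ _ _).symm

theorem Tsym (S : Finset G) : ((Mop' S) ∘ₗ (Mop S)).IsSymmetric := by
  intro f g
  have h1 : ⟪Mop' S (Mop S f), g⟫ = ⟪Mop S f, Mop S g⟫ := pairing S (Mop S f) g
  have h2 : ⟪Mop' S (Mop S g), f⟫ = ⟪Mop S g, Mop S f⟫ := pairing S (Mop S g) f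
  show ⟪Mop' S (Mop S f), g⟫ = ⟪f, Mop' S (Mop S g)⟫
  rw [h1, ← inner_conj_symm f, h2, inner_conj_symm]

noncomputable def oneV (G : Type) [Fintype G] : Vsp G := WithLp.toLp 2 (fun _ => (1 : ℂ))

noncomputable def sumL (G : Type) [Fintype G] : Vsp G →ₗ[ℂ] ℂ where
  toFun v := ∑ x, v x
  map_add' f g := Finset.sum_add_distrib
  map_smul' c f := by simp [Finset.mul_sum]

theorem inner_one (v : Vsp G) : ⟪oneV G, v⟫ = ∑ x, v x := by
  rw [inner_apply']; simp [oneV]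

theorem Mop_one (S : Finset G) : Mop S (oneV G) = (S.card : ℂ) • oneV G := by
  ext x
  show ∑ s ∈ S, (1:ℂ) = (S.card : ℂ) * 1
  simp

theorem Mop'_one (S : Finset G) : Mop' S (oneV G) = (S.card : ℂ) • oneV G := by
  ext x
  show ∑ s ∈ S, (1:ℂ) = (S.card : ℂ) * 1
  simp

theorem Top_one (S : Finset G) :
    (Mop' S ∘ₗ Mop S) (oneV G) = (((S.card : ℝ)^2 : ℝ) : ℂ) • oneV G := by
  show Mop' S (Mop S (oneV G)) = _
  rw [Mop_one, map_smul, Mop'_one, smul_smul]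
  push_cast
  ring_nf

theorem Mop_comm (S : Finset G) (g : G) (v : Vsp G) :
    Mop S (rRep G g v) = rRep G g (Mop S v) := by
  ext x
  show ∑ s ∈ S, v (s⁻¹ * x * g) = ∑ s ∈ S, v (s⁻¹ * (x * g))
  exact Finset.sum_congr rfl fun s _ => congrArg v (mul_assoc _ _ _)

theorem Mop'_comm (S : Finset G) (g : G) (v : Vsp G) :
    Mop' S (rRep G g v) = rRep G g (Mop' S v) := by
  ext x
  show ∑ s ∈ S, v (s * x * g) = ∑ s ∈ S, v (s * (x * g))
  exact Finset.sum_congr rfl fun s _ => congrArg v (mul_assoc _ _ _)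

theorem Top_comm (S : Finset G) (g : G) (v : Vsp G) :
    (Mop' S ∘ₗ Mop S) (rRep G g v) = rRep G g ((Mop' S ∘ₗ Mop S) v) := by
  show Mop' S (Mop S (rRep G g v)) = rRep G g (Mop' S (Mop S v))
  rw [Mop_comm, Mop'_comm]

theorem Mop_single (S : Finset G) (v : Vsp G) (x : G) :
    (Mop S v) x = ⟪Mop' S (EuclideanSpace.single x 1), v⟫ := by
  rw [pairing, inner_apply']
  rw [Fintype.sum_eq_single x]
  · simp [EuclideanSpace.single_apply]
  · intro y hy
    simp [EuclideanSpace.single_apply, hy]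

theorem wnorm (S : Finset G) (x : G) :
    ⟪Mop' S (EuclideanSpace.single x (1:ℂ)), Mop' S (EuclideanSpace.single x 1)⟫
      = (S.card : ℂ) := by
  have hw : ∀ y, (Mop' S (EuclideanSpace.single x (1:ℂ))) y
      = if x * y⁻¹ ∈ S then (1:ℂ) else 0 := by
    intro y
    show (∑ s ∈ S, (EuclideanSpace.single x (1:ℂ)) (s * y)) = _
    rw [show (∑ s ∈ S, (EuclideanSpace.single x (1:ℂ)) (s * y))
        = ∑ s ∈ S, if s = x * y⁻¹ then (1:ℂ) else 0 from
      Finset.sum_congr rfl fun s _ => by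
        rw [EuclideanSpace.single_apply]
        congr 1
        simp [eq_comm, mul_inv_eq_iff_eq_mul, eq_mul_inv_iff_mul_eq]]
    rw [Finset.sum_ite_eq' S]
  rw [inner_apply']
  have : ∀ y, conj ((Mop' S (EuclideanSpace.single x (1:ℂ))) y)
      * ((Mop' S (EuclideanSpace.single x (1:ℂ))) y) = if x * y⁻¹ ∈ S then (1:ℂ) else 0 := by
    intro y; rw [hw y]; split <;> simp
  rw [Finset.sum_congr rfl fun y _ => this y]
  let e : G ≃ G := (Equiv.inv G).trans (Equiv.mulLeft x)
  have h2 := Fintype.sum_equiv e (fun y => if x * y⁻¹ ∈ S then (1:ℂ) else 0)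
      (fun z => if z ∈ S then (1:ℂ) else 0) (fun y => by
        have he : e y = x * y⁻¹ := rfl
        rw [he])
  rw [h2]
  simp [Finset.sum_ite_mem]

theorem traceT (S : Finset G) {ι : Type} [Fintype ι] (b : OrthonormalBasis ι ℂ (Vsp G)) :
    ∑ i, ⟪Mop S (b i), Mop S (b i)⟫ = ((Fintype.card G : ℂ) * S.card) := by
  have step : ∀ i, ⟪Mop S (b i), Mop S (b i)⟫
      = ∑ x, ⟪Mop' S (EuclideanSpace.single x 1), b i⟫ * ⟪b i, Mop' S (EuclideanSpace.single x 1)⟫ := by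
    intro i
    rw [inner_apply']
    refine Finset.sum_congr rfl fun x _ => ?_
    rw [Mop_single S (b i) x, inner_conj_symm, mul_comm]
  rw [Finset.sum_congr rfl fun i _ => step i, Finset.sum_comm]
  rw [Finset.sum_congr rfl fun x _ => b.sum_inner_mul_inner _ _]
  rw [Finset.sum_congr rfl fun x _ => wnorm S x]
  simp [Finset.card_univ, mul_comm]

theorem spectral_bound (S : Finset G) (δ : ℝ) (hδ : 0 < δ)
    (hrep : ∀ V : FDRep ℂ G, CategoryTheory.Simple V →
      (∃ (g : G) (v : V), V.ρ g v ≠ v) → δ ≤ Module.finrank ℂ V)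
    (f : Vsp G) (hf : ∑ x, f x = 0) :
    (⟪Mop S f, Mop S f⟫).re ≤ ((Fintype.card G : ℝ) * S.card / δ) * (⟪f, f⟫).re := by
  classical
  set n := Fintype.card G with hndef
  have hnpos : 0 < n := Fintype.card_pos
  have hn0 : (n : ℂ) ≠ 0 := Nat.cast_ne_zero.mpr hnpos.ne'
  set T := Mop' S ∘ₗ Mop S with hTdef
  have hsym : T.IsSymmetric := Tsym S
  have hn : Module.finrank ℂ (Vsp G) = n := finrank_euclideanSpace
  set b := hsym.eigenvectorBasis hn with hbdef
  set μ := hsym.eigenvalues hn with hμdef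
  have hb : ∀ i, T (b i) = ((μ i : ℝ) : ℂ) • b i := fun i =>
    Module.End.mem_eigenspace_iff.mp (hsym.hasEigenvector_eigenvectorBasis hn i).1
  have hbi1 : ∀ i, ⟪b i, b i⟫ = 1 := by
    intro i
    have := (orthonormal_iff_ite.mp b.orthonormal) i i
    simpa using this
  have hpair : ∀ v : Vsp G, ⟪T v, v⟫ = ⟪Mop S v, Mop S v⟫ := fun v => pairing S (Mop S v) v
  have hμval : ∀ i, ⟪Mop S (b i), Mop S (b i)⟫ = ((μ i : ℝ) : ℂ) := by
    intro i
    rw [← hpair, hb i, inner_smul_left, Complex.conj_ofReal, hbi1, mul_one]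
  have hμ0 : ∀ i, 0 ≤ μ i := by
    intro i
    have h1 := hμval i
    have h2 := inner_self_nonneg (𝕜 := ℂ) (x := Mop S (b i))
    rw [h1] at h2
    simpa using h2
  have htr : ∑ i, μ i = (n : ℝ) * S.card := by
    have h1 := traceT S b
    rw [Finset.sum_congr rfl fun i _ => hμval i] at h1
    have h2 : ((∑ i, μ i : ℝ) : ℂ) = (((n : ℝ) * S.card : ℝ) : ℂ) := by
      push_cast at h1 ⊢
      exact h1
    exact_mod_cast h2
  have hTone : T (oneV G) = (((S.card : ℝ)^2 : ℝ) : ℂ) • oneV G := Top_one S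
  have claim : ∀ i, ⟪b i, f⟫ ≠ 0 → μ i ≤ (n : ℝ) * S.card / δ := by
    intro i hci
    set Ei := Module.End.eigenspace T ((μ i : ℝ) : ℂ) with hEidef
    have hbiE : b i ∈ Ei := (hsym.hasEigenvector_eigenvectorBasis hn i).1
    set Wi := Ei ⊓ LinearMap.ker (sumL G) with hWidef
    have hsum_one : sumL G (oneV G) = (n : ℂ) := by
      show ∑ _x : G, (1:ℂ) = (n:ℂ)
      simp [hndef]
    by_cases hW : Wi = ⊥
    · exfalso
      by_cases hμm : μ i = (S.card : ℝ)^2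
      · -- b i is constant, contradicting ⟪b i, f⟫ ≠ 0
        set c : ℂ := (∑ x, b i x) / n with hcdef
        have hmem : b i - c • oneV G ∈ Wi := by
          refine Submodule.mem_inf.mpr ⟨?_, ?_⟩
          · refine Module.End.mem_eigenspace_iff.mpr ?_
            rw [map_sub, map_smul, hb i, hTone, hμm]
            module
          · refine LinearMap.mem_ker.mpr ?_
            rw [map_sub, map_smul, hsum_one]
            have h2 : sumL G (b i) = ∑ x, b i x := rfl
            rw [h2, hcdef]
            rw [smul_eq_mul]; field_simp; simp
        rw [hW] at hmem
        have hbc : b i = c • oneV G :=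
          sub_eq_zero.mp (Submodule.mem_bot (R := ℂ) |>.mp hmem)
        apply hci
        rw [hbc, inner_smul_left, inner_one, hf, mul_zero]
      · -- ⟪one, b i⟫ = 0, so b i ∈ Wi = ⊥, contradiction
        have h1 : ⟪T (oneV G), b i⟫ = ⟪oneV G, T (b i)⟫ := hsym (oneV G) (b i)
        rw [hTone, hb i, inner_smul_left, inner_smul_right, Complex.conj_ofReal] at h1
        have h2 : (((S.card : ℝ)^2 - μ i : ℝ) : ℂ) * ⟪oneV G, b i⟫ = 0 := by
          push_cast at h1 ⊢
          linear_combination h1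
        have h3 : ⟪oneV G, b i⟫ = 0 := by
          rcases mul_eq_zero.mp h2 with h | h
          · exfalso
            apply hμm
            have h4 : ((S.card : ℝ)^2 - μ i : ℝ) = 0 := by exact_mod_cast h
            linarith
          · exact h
        have h4 : b i ∈ Wi := Submodule.mem_inf.mpr ⟨hbiE, LinearMap.mem_ker.mpr (by
          rw [show sumL G (b i) = ∑ x, b i x from rfl, ← inner_one, h3])⟩
        rw [hW] at h4
        exact b.orthonormal.ne_zero i (Submodule.mem_bot (R := ℂ) |>.mp h4)
    · -- Wi ≠ ⊥ : use representation theory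
      have hWinv : ∀ g, ∀ v ∈ Wi, rRep G g v ∈ Wi := by
        intro g v hv
        obtain ⟨hv1, hv2⟩ := Submodule.mem_inf.mp hv
        refine Submodule.mem_inf.mpr ⟨?_, ?_⟩
        · refine Module.End.mem_eigenspace_iff.mpr ?_
          have hv1' : T v = ((μ i : ℝ) : ℂ) • v := Module.End.mem_eigenspace_iff.mp hv1
          rw [Top_comm, hv1', map_smul]
        · refine LinearMap.mem_ker.mpr ?_
          have hv2' : sumL G v = 0 := hv2
          have heq : sumL G (rRep G g v) = sumL G v := by
            show ∑ x, v (x * g) = ∑ x, v x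
            exact Fintype.sum_equiv (Equiv.mulRight g) _ _ fun x => rfl
          rw [heq, hv2']
      have hWfix : ∀ v ∈ Wi, (∀ g, rRep G g v = v) → v = 0 := by
        intro v hv hfix
        obtain ⟨_, hv2⟩ := Submodule.mem_inf.mp hv
        have hv2' : sumL G v = 0 := hv2
        have hconst : ∀ x, v x = v 1 := by
          intro x
          have h1 : (rRep G x v) 1 = v 1 := by rw [hfix x]
          have h2 : (rRep G x v) 1 = v (1 * x) := rfl
          rw [h2, one_mul] at h1
          exact h1
        have h0 : (0:ℂ) = (n : ℂ) * v 1 := by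
          rw [← hv2']
          rw [show sumL G v = ∑ x, v x from rfl, Finset.sum_congr rfl fun x _ => hconst x]
          rw [Finset.sum_const]
          simp [hndef]
        have hv1 : v 1 = 0 := by
          rcases mul_eq_zero.mp h0.symm with h | h
          · exact absurd h hn0
          · exact h
        ext x
        rw [hconst x, hv1]
        rfl
      have hδle : δ ≤ (Module.finrank ℂ Wi : ℝ) :=
        delta_le_finrank (rRep G) δ hrep Wi hWinv hW hWfix
      set J := Finset.univ.filter (fun j => μ j = μ i) with hJdef
      have hspan : Ei ≤ Submodule.span ℂ ((J.image b : Finset (Vsp G)) : Set (Vsp G)) := by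
        intro v hv
        have hv' : T v = ((μ i : ℝ) : ℂ) • v := Module.End.mem_eigenspace_iff.mp hv
        rw [← b.sum_repr' v]
        refine Submodule.sum_mem _ fun j _ => ?_
        by_cases hj : μ j = μ i
        · refine Submodule.smul_mem _ _ (Submodule.subset_span ?_)
          simp only [Finset.coe_image, Set.mem_image, Finset.mem_coe, Finset.mem_filter]
          exact ⟨j, by simp [hJdef, hj], rfl⟩
        · have hz : ⟪b j, v⟫ = 0 := by
            have h1 : ⟪T (b j), v⟫ = ⟪b j, T v⟫ := hsym (b j) v
            rw [hb j, hv', inner_smul_left, inner_smul_right, Complex.conj_ofReal] at h1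
            have h2 : (((μ j : ℝ) - μ i : ℝ) : ℂ) * ⟪b j, v⟫ = 0 := by
              push_cast at h1 ⊢
              linear_combination h1
            rcases mul_eq_zero.mp h2 with h | h
            · exfalso
              apply hj
              have h4 : ((μ j : ℝ) - μ i : ℝ) = 0 := by exact_mod_cast h
              linarith
            · exact h
          rw [hz, zero_smul]
          exact Submodule.zero_mem _
      have hEdim : Module.finrank ℂ Ei ≤ J.card := by
        calc Module.finrank ℂ Ei
            ≤ Module.finrank ℂ (Submodule.span ℂ ((J.image b : Finset (Vsp G)) : Set (Vsp G))) :=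
              Submodule.finrank_mono hspan
          _ ≤ (J.image b).card := finrank_span_finset_le_card (J.image b)
          _ ≤ J.card := Finset.card_image_le
      have hδJ : δ ≤ (J.card : ℝ) := by
        calc δ ≤ (Module.finrank ℂ Wi : ℝ) := hδle
          _ ≤ (J.card : ℝ) := by
            have h5 := le_trans (Submodule.finrank_mono (inf_le_left : Wi ≤ Ei)) hEdim
            exact_mod_cast h5
      have hsumJ : μ i * (J.card : ℝ) ≤ ∑ j, μ j := by
        have h1 : ∑ j ∈ J, μ j = (J.card : ℝ) * μ i := by
          rw [Finset.sum_congr rfl fun j hj => (Finset.mem_filter.mp hj).2]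
          rw [Finset.sum_const]
          simp [mul_comm, hJdef]
        calc μ i * (J.card : ℝ) = ∑ j ∈ J, μ j := by rw [h1, mul_comm]
          _ ≤ ∑ j, μ j :=
            Finset.sum_le_sum_of_subset_of_nonneg (Finset.subset_univ J) fun j _ _ => hμ0 j
      rw [le_div_iff₀ hδ]
      calc μ i * δ ≤ μ i * (J.card : ℝ) := mul_le_mul_of_nonneg_left hδJ (hμ0 i)
        _ ≤ ∑ j, μ j := hsumJ
        _ = (n : ℝ) * S.card := htr
  -- final expansion
  have hterm : ∀ i, ⟪f, b i⟫ * ⟪b i, f⟫ = ((Complex.normSq ⟪b i, f⟫ : ℝ) : ℂ) := by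
    intro i
    rw [← inner_conj_symm f (b i)]
    rw [mul_comm, Complex.mul_conj]
  have hff : (⟪f, f⟫).re = ∑ i, Complex.normSq ⟪b i, f⟫ := by
    rw [← b.sum_inner_mul_inner f f, Finset.sum_congr rfl fun i _ => hterm i]
    rw [← Complex.ofReal_sum]
    exact Complex.ofReal_re _
  have hMff : (⟪Mop S f, Mop S f⟫).re = ∑ i, μ i * Complex.normSq ⟪b i, f⟫ := by
    rw [← hpair, ← b.sum_inner_mul_inner (T f) f]
    have hterm2 : ∀ i, ⟪T f, b i⟫ * ⟪b i, f⟫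
        = ((μ i * Complex.normSq ⟪b i, f⟫ : ℝ) : ℂ) := by
      intro i
      have h1 : ⟪T f, b i⟫ = conj ⟪b i, T f⟫ := (inner_conj_symm _ _).symm
      have h2 : ⟪b i, T f⟫ = ⟪T (b i), f⟫ := (hsym (b i) f).symm
      rw [h1, h2, hb i, inner_smul_left, Complex.conj_ofReal, map_mul, Complex.conj_ofReal,
        mul_assoc]
      push_cast
      congr 1
      rw [mul_comm, Complex.mul_conj]
    rw [Finset.sum_congr rfl fun i _ => hterm2 i, ← Complex.ofReal_sum]
    exact Complex.ofReal_re _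
  rw [hff, hMff, Finset.mul_sum]
  refine Finset.sum_le_sum fun i _ => ?_
  by_cases hzero : ⟪b i, f⟫ = 0
  · rw [hzero]
    simp
  · exact mul_le_mul_of_nonneg_right (claim i hzero) (Complex.normSq_nonneg _)

theorem re_inner_self (v : Vsp G) : (⟪v, v⟫).re = ∑ x, Complex.normSq (v x) := by
  rw [inner_apply']
  have h : ∀ x : G, conj (v x) * v x = ((Complex.normSq (v x) : ℝ) : ℂ) := fun x => by
    rw [mul_comm, Complex.mul_conj]
  rw [Finset.sum_congr rfl fun x _ => h x, ← Complex.ofReal_sum]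
  exact Complex.ofReal_re _

theorem arith_end (a N δ : ℝ) (ha1 : 1 ≤ a) (hN0 : 0 < N) (hδ : 0 < δ)
    (hkey : a * (a^2/N)^2 ≤ (N * a / δ) * a) : a ≤ N / δ ^ ((1:ℝ)/3) := by
  have ha0 : (0:ℝ) < a := by linarith
  have hcube : a^3 ≤ N^3 / δ := by
    have h5 : a^5 / N^2 ≤ N * a^2 / δ := by
      calc a^5 / N^2 = a * (a^2/N)^2 := by field_simp
        _ ≤ (N * a / δ) * a := hkey
        _ = N * a^2 / δ := by ring
    rw [div_le_div_iff₀ (by positivity) hδ] at h5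
    rw [le_div_iff₀ hδ]
    have ha2 : (1:ℝ) ≤ a^2 := by nlinarith
    have h6 : a^3 * δ * a^2 ≤ N^3 * a^2 := by nlinarith [h5]
    exact le_of_mul_le_mul_right h6 (by positivity)
  have h1 : a = (a^3 : ℝ) ^ ((1:ℝ)/3) := by
    rw [← Real.rpow_natCast a 3, ← Real.rpow_mul ha0.le]
    norm_num
  have h2 : (N^3 / δ : ℝ) ^ ((1:ℝ)/3) = N / δ ^ ((1:ℝ)/3) := by
    rw [Real.div_rpow (by positivity) hδ.le]
    congr 1
    rw [← Real.rpow_natCast N 3, ← Real.rpow_mul hN0.le]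
    norm_num
  rw [h1, ← h2]
  exact Real.rpow_le_rpow (by positivity) hcube (by norm_num)


/-- Let `G` be a finite group of order `n > 1`, and let `δ > 0` be such that every
nontrivial irreducible complex representation of `G` has dimension at least `δ`.
Then every product-free subset `S` of `G` satisfies `|S| ≤ n / δ^(1/3)`. -/
theorem product_free_bound
    {G : Type} [Group G] [Fintype G] [DecidableEq G]
    (n : ℕ) (hn : n = Fintype.card G) (hn1 : 1 < n)
    (δ : ℝ) (hδ : 0 < δ)
    (hrep : ∀ V : FDRep ℂ G, CategoryTheory.Simple V →
      (∃ (g : G) (v : V), V.ρ g v ≠ v) → δ ≤ Module.finrank ℂ V)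
    (S : Finset G)
    (hfree : ∀ a ∈ S, ∀ b ∈ S, a * b ∉ S) :
    (S.card : ℝ) ≤ (n : ℝ) / δ ^ ((1 : ℝ) / 3) := by
  classical
  have hδ13 : (0:ℝ) < δ ^ ((1:ℝ)/3) := Real.rpow_pos_of_pos hδ _
  by_cases hS : S = ∅
  · rw [hS]
    simp only [Finset.card_empty, Nat.cast_zero]
    positivity
  · have hm1 : 1 ≤ S.card := Finset.card_pos.mpr (Finset.nonempty_of_ne_empty hS)
    set N : ℝ := (n : ℝ) with hNdef
    set a : ℝ := (S.card : ℝ) with hadef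
    have ha1 : (1:ℝ) ≤ a := by rw [hadef]; exact_mod_cast hm1
    have ha0 : (0:ℝ) < a := by linarith
    have hN0 : (0:ℝ) < N := by
      rw [hNdef]
      have h9 : 0 < n := by omega
      exact_mod_cast h9
    have haN : a ≤ N := by
      rw [hadef, hNdef, hn]
      exact_mod_cast Finset.card_le_card (Finset.subset_univ S)
    have hNne : ((Fintype.card G : ℂ)) ≠ 0 := Nat.cast_ne_zero.mpr Fintype.card_pos.ne'
    -- the test function
    set χ : Vsp G := (WithLp.toLp 2 (fun x => if x ∈ S then (1:ℂ) else 0) : Vsp G) with hχdef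
    set fv : Vsp G := χ - ((S.card : ℂ)/(Fintype.card G : ℂ)) • oneV G with hfvdef
    have hχsum : ∑ x, χ x = (S.card : ℂ) := by
      rw [hχdef]
      simp [Finset.sum_ite_mem]
    have hfsum : ∑ x, fv x = 0 := by
      rw [hfvdef]
      have : ∀ x : G, (χ - ((S.card : ℂ)/(Fintype.card G : ℂ)) • oneV G) x
          = χ x - (S.card : ℂ)/(Fintype.card G : ℂ) := by
        intro x
        show χ x - (S.card : ℂ)/(Fintype.card G : ℂ) * 1 = _
        ring
      rw [Finset.sum_congr rfl fun x _ => this x, Finset.sum_sub_distrib, hχsum,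
        Finset.sum_const]
      simp only [Finset.card_univ, nsmul_eq_mul]
      field_simp
      simp
    have hMχ : ∀ x ∈ S, (Mop S χ) x = 0 := by
      intro x hx
      show ∑ s ∈ S, χ (s⁻¹ * x) = 0
      refine Finset.sum_eq_zero fun s hs => ?_
      rw [hχdef]
      have : s⁻¹ * x ∉ S := by
        intro hmem
        exact hfree s hs (s⁻¹ * x) hmem (by rw [mul_inv_cancel_left]; exact hx)
      simp [this]
    have hMf : ∀ x ∈ S, (Mop S fv) x = ((-(a^2/N) : ℝ) : ℂ) := by
      intro x hx
      rw [hfvdef, map_sub, map_smul]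
      have h1 : (Mop S χ - ((S.card : ℂ)/(Fintype.card G : ℂ)) • Mop S (oneV G)) x
          = (Mop S χ) x - ((S.card : ℂ)/(Fintype.card G : ℂ)) * ((Mop S (oneV G)) x) := rfl
      rw [h1, hMχ x hx, Mop_one]
      have h2 : ((S.card : ℂ) • oneV G) x = (S.card : ℂ) := by
        show (S.card : ℂ) * 1 = _
        ring
      rw [h2, hadef, hNdef, hn]
      push_cast
      field_simp
      ring
    -- apply spectral bound
    have hspec := spectral_bound S δ hδ hrep fv hfsum
    -- lower bound for LHS
    have hlow : a * (a^2/N)^2 ≤ (⟪Mop S fv, Mop S fv⟫).re := by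
      rw [re_inner_self]
      have h1 : ∑ x ∈ S, Complex.normSq ((Mop S fv) x) ≤ ∑ x, Complex.normSq ((Mop S fv) x) :=
        Finset.sum_le_sum_of_subset_of_nonneg (Finset.subset_univ S)
          fun x _ _ => Complex.normSq_nonneg _
      refine le_trans ?_ h1
      rw [Finset.sum_congr rfl fun x hx => by rw [hMf x hx, Complex.normSq_ofReal]]
      rw [Finset.sum_const]
      have : (-(a^2/N)) * (-(a^2/N)) = (a^2/N)^2 := by ring
      rw [this]
      rw [nsmul_eq_mul, ← hadef]
    -- upper bound for ⟪fv, fv⟫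
    have hup : (⟪fv, fv⟫).re ≤ a := by
      rw [re_inner_self]
      have hval : ∀ x, Complex.normSq (fv x)
          = (a/N)^2 + (if x ∈ S then (1-a/N)^2 - (a/N)^2 else 0) := by
        intro x
        have hfx : fv x = χ x - (S.card : ℂ)/(Fintype.card G : ℂ) := by
          rw [hfvdef]
          show χ x - (S.card : ℂ)/(Fintype.card G : ℂ) * 1 = _
          ring
        by_cases hx : x ∈ S
        · have : fv x = ((1 - a/N : ℝ) : ℂ) := by
            rw [hfx, hχdef]
            simp only [hx, if_true]
            rw [hadef, hNdef, hn]
            push_cast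
            ring
          rw [this, Complex.normSq_ofReal]
          simp [hx]
          ring
        · have : fv x = ((-(a/N) : ℝ) : ℂ) := by
            rw [hfx, hχdef]
            simp only [hx, if_false]
            rw [hadef, hNdef, hn]
            push_cast
            ring
          rw [this, Complex.normSq_ofReal]
          simp [hx]
          ring
      rw [Finset.sum_congr rfl fun x _ => hval x, Finset.sum_add_distrib, Finset.sum_const,
        Finset.sum_ite_mem, Finset.univ_inter, Finset.sum_const]
      have hcards : (((Finset.univ : Finset G)).card : ℝ) = N := by
        rw [hNdef, hn, Finset.card_univ]
      rw [nsmul_eq_mul, nsmul_eq_mul, hcards, ← hadef]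
      have heq : N * (a/N)^2 + a * ((1-a/N)^2 - (a/N)^2) = a*(N-a)/N := by
        field_simp
        ring
      rw [heq, div_le_iff₀ hN0]
      nlinarith [sq_nonneg a]
    -- combine
    have hcgeq : ((Fintype.card G : ℝ) * S.card / δ) = N * a / δ := by
      rw [hadef, hNdef, hn]
    rw [hcgeq] at hspec
    have hkey : a * (a^2/N)^2 ≤ (N * a / δ) * a := by
      calc a * (a^2/N)^2 ≤ (⟪Mop S fv, Mop S fv⟫).re := hlow
        _ ≤ (N * a / δ) * (⟪fv, fv⟫).re := hspec
        _ ≤ (N * a / δ) * a := by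
            refine mul_le_mul_of_nonneg_left hup ?_
            positivity
    exact arith_end a N δ ha1 hN0 hδ hkey
end

section
/- There exists a constant c > 0 such that for every finite group G of order n > 1, if m denotes the smallest index of a proper subgroup of G (the index of the largest proper subgroup), then G contains a product-free subset of size at least c·n·m^(-1/2); that is, α(G) ≥ c·n·m^(-1/2) and β(G) ≥ c·m^(-1/2). -/
open Finset
open scoped Classical

lemma bern_moment {Ω : Type} [Fintype Ω] [DecidableEq Ω] (p : ℝ) (T : Finset Ω) :
    ∑ A ∈ Finset.univ.powerset,
      (p ^ A.card * (1-p) ^ ((Finset.univ \ A).card)) * (if T ⊆ A then (1:ℝ) else 0)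
      = p ^ T.card := by
  have h := Finset.prod_add (fun _ : Ω => p) (fun x => if x ∈ T then 0 else (1-p)) Finset.univ
  have hR : ∑ A ∈ Finset.univ.powerset,
      (∏ _x ∈ A, p) * ∏ x ∈ Finset.univ \ A, (if x ∈ T then (0:ℝ) else (1-p))
      = ∑ A ∈ Finset.univ.powerset,
      (p ^ A.card * (1-p) ^ ((Finset.univ \ A).card)) * (if T ⊆ A then (1:ℝ) else 0) := by
    refine Finset.sum_congr rfl ?_
    intro A _
    by_cases hTA : T ⊆ A
    · have he : ∏ x ∈ Finset.univ \ A, (if x ∈ T then (0:ℝ) else (1-p))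
          = (1-p) ^ ((Finset.univ \ A).card) := by
        rw [Finset.prod_congr rfl (fun x hx => ?_), Finset.prod_const]
        rw [Finset.mem_sdiff] at hx
        have : x ∉ T := fun h => hx.2 (hTA h)
        simp [this]
      simp [he, hTA, Finset.prod_const]
    · obtain ⟨t, htT, htA⟩ := Finset.not_subset.mp hTA
      have he : ∏ x ∈ Finset.univ \ A, (if x ∈ T then (0:ℝ) else (1-p)) = 0 :=
        Finset.prod_eq_zero (Finset.mem_sdiff.mpr ⟨Finset.mem_univ _, htA⟩) (by simp [htT])
      simp [he, hTA]
  have hL : ∏ x ∈ Finset.univ, (p + if x ∈ T then (0:ℝ) else (1-p)) = p ^ T.card := by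
    rw [← Finset.prod_sdiff (Finset.subset_univ T)]
    have h1 : ∏ x ∈ Finset.univ \ T, (p + if x ∈ T then (0:ℝ) else (1-p)) = 1 := by
      apply Finset.prod_eq_one
      intro x hx
      rw [Finset.mem_sdiff] at hx
      simp [hx.2]
    have h2 : ∏ x ∈ T, (p + if x ∈ T then (0:ℝ) else (1-p)) = p ^ T.card := by
      have he : ∀ x ∈ T, (p + if x ∈ T then (0:ℝ) else (1-p)) = p := fun x hx => by simp [hx]
      rw [Finset.prod_congr rfl he, Finset.prod_const]
    rw [h1, h2, one_mul]
  rw [← hR, ← h, hL]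

set_option maxHeartbeats 1600000 in
/-- There is a constant `c > 0` such that every finite group `G` of order `n > 1` contains
a product-free subset of size at least `c * n * m ^ (-1/2)`, where `m` is the smallest
index of a proper subgroup of `G`. -/
theorem product_free_lower_bound :
    ∃ c : ℝ, 0 < c ∧
      ∀ (G : Type) [Group G] [Fintype G],
        1 < Fintype.card G →
        ∀ m : ℕ, IsLeast {k : ℕ | ∃ H : Subgroup G, H ≠ ⊤ ∧ H.index = k} m →
          ∃ S : Finset G, (∀ a ∈ S, ∀ b ∈ S, a * b ∉ S) ∧
            c * (Fintype.card G : ℝ) * (m : ℝ) ^ (-(1 : ℝ) / 2) ≤ S.card := by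
  classical
  refine ⟨1/16, by norm_num, ?_⟩
  intro G _ _ hn m hm
  obtain ⟨⟨H, hH, hHidx⟩, -⟩ := hm
  set n := Fintype.card G with hndef
  -- basic facts
  have hmn : m * Nat.card H = n := by
    rw [← hHidx, Subgroup.index_mul_card, Nat.card_eq_fintype_card]
  have hHne : Nat.card H ≠ 0 := Nat.card_pos.ne'
  have hm2 : 2 ≤ m := by
    rcases Nat.lt_or_ge m 2 with h | h
    · interval_cases m
      · simp at hmn; omega
      · exact absurd (Subgroup.index_eq_one.mp hHidx) hH
    · exact h
  have hm0 : (0:ℝ) < m := by positivity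
  -- the sqrt
  set s : ℝ := Real.sqrt m with hsdef
  have hs0 : 0 < s := Real.sqrt_pos.mpr hm0
  have hs2 : s^2 = (m:ℝ) := Real.sq_sqrt hm0.le
  have hrpow : (m:ℝ) ^ (-(1:ℝ)/2) = s⁻¹ := by
    rw [neg_div, Real.rpow_neg (by positivity), ← Real.sqrt_eq_rpow]
  rw [hrpow]
  by_cases hsmall : m ≤ 256
  · -- small index : use a single nontrivial coset of H
    have hg0 : ∃ g₀ : G, g₀ ∉ H := by
      by_contra h
      push_neg at h
      exact hH ((Subgroup.eq_top_iff' H).mpr h)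
    obtain ⟨g₀, hg₀⟩ := hg0
    refine ⟨(Finset.univ.filter (· ∈ H)).image (fun h => g₀ * h), ?_, ?_⟩
    · intro a ha b hb hab
      simp only [Finset.mem_image, Finset.mem_filter, Finset.mem_univ, true_and] at ha hb hab
      obtain ⟨h₁, hh₁, rfl⟩ := ha
      obtain ⟨h₂, hh₂, rfl⟩ := hb
      obtain ⟨h₃, hh₃, he⟩ := hab
      apply hg₀
      have : g₀ = h₁⁻¹ * h₃ * h₂⁻¹ := by
        have h' : g₀ * h₃ = g₀ * (h₁ * g₀ * h₂) := by rw [he]; group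
        have h'' := mul_left_cancel h'
        rw [h'']; group
      rw [this]
      exact H.mul_mem (H.mul_mem (H.inv_mem hh₁) hh₃) (H.inv_mem hh₂)
    · have hcard : ((Finset.univ.filter (· ∈ H)).image (fun h => g₀ * h)).card = Nat.card H := by
        rw [Finset.card_image_of_injective _ (mul_right_injective g₀),
          ← Fintype.card_subtype, Nat.card_eq_fintype_card]
      rw [hcard]
      -- (1/16) * n * s⁻¹ ≤ Nat.card H,  n = m * Nat.card H, s = √m ≤ 16
      have hs16 : s ≤ 16 := by
        rw [hsdef, show (16:ℝ) = Real.sqrt 256 by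
          rw [show (256:ℝ) = 16^2 by norm_num, Real.sqrt_sq (by norm_num)]]
        exact Real.sqrt_le_sqrt (by exact_mod_cast hsmall)
      have hnr : (n:ℝ) = m * Nat.card H := by exact_mod_cast hmn.symm
      rw [hnr]
      have hK : (0:ℝ) ≤ (Nat.card H : ℝ) := by positivity
      have : (1/16) * ((m:ℝ) * Nat.card H) * s⁻¹ = ((Nat.card H : ℝ)) * (s / 16) := by
        rw [← hs2]; field_simp
      rw [this]
      nlinarith
  · -- large index : probabilistic construction
    push_neg at hsmall
    have hs16 : 16 ≤ s := by
      rw [hsdef, show (16:ℝ) = Real.sqrt 256 by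
        rw [show (256:ℝ) = 16^2 by norm_num, Real.sqrt_sq (by norm_num)]]
      exact Real.sqrt_le_sqrt (by exact_mod_cast hsmall.le)
    letI : Fintype (G ⧸ H) := Fintype.ofFinite _
    have hcardΩ : Fintype.card (G ⧸ H) = m := by
      rw [← hHidx, Subgroup.index, Nat.card_eq_fintype_card]
    set x₀ : G ⧸ H := ((1:G) : G ⧸ H) with hx₀
    set p : ℝ := 1/(4*s) with hpdef
    have hp0 : 0 < p := by positivity
    have hp1 : p ≤ 1 := by
      rw [hpdef]
      rw [div_le_one (by positivity)]
      nlinarith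
    -- the random set construction
    set S : Finset (G ⧸ H) → Finset G :=
      fun A => Finset.univ.filter (fun g : G => g • x₀ ∈ A ∧ ∀ a ∈ A, g • a ∉ A) with hSdef
    have hSfree : ∀ A, ∀ a ∈ S A, ∀ b ∈ S A, a * b ∉ S A := by
      intro A a ha b hb hab
      simp only [hSdef, Finset.mem_filter, Finset.mem_univ, true_and] at ha hb hab
      exact ha.2 (b • x₀) hb.1 (by rw [← mul_smul]; exact hab.1)
    -- weights
    set w : Finset (G ⧸ H) → ℝ :=
      fun A => p ^ A.card * (1-p) ^ ((Finset.univ \ A).card) with hwdef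
    have hw0 : ∀ A, 0 < w A := by
      intro A
      have : p < 1 := lt_of_le_of_lt (by rw [hpdef]; rw [div_le_div_iff₀ (by positivity) (by norm_num)]; nlinarith : p ≤ 1/2) (by norm_num)
      rw [hwdef]
      have h1 : (0:ℝ) < 1 - p := by linarith
      positivity
    have hwsum : ∑ A ∈ Finset.univ.powerset, w A = 1 := by
      have := bern_moment p (∅ : Finset (G ⧸ H))
      simpa using this
    have hmom : ∀ T : Finset (G ⧸ H),
        ∑ A ∈ Finset.univ.powerset, w A * (if T ⊆ A then (1:ℝ) else 0) = p ^ T.card := by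
      intro T
      rw [hwdef]
      simpa using bern_moment p T
    -- stabilizer cardinality
    have hstab : ∀ a : G ⧸ H,
        (Finset.univ.filter (fun g : G => g • a = a)).card = Nat.card H := by
      intro a
      obtain ⟨y, rfl⟩ := QuotientGroup.mk_surjective a
      have hHcard : (Finset.univ.filter (· ∈ H)).card = Nat.card H := by
        rw [Nat.card_eq_fintype_card, ← Fintype.card_subtype]
      rw [← hHcard]
      apply Finset.card_bij (fun (g : G) _ => (g * y)⁻¹ * y)
      · intro g hg
        simp only [Finset.mem_filter, Finset.mem_univ, true_and] at hg ⊢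
        exact QuotientGroup.eq.mp hg
      · intro g₁ h₁ g₂ h₂ he
        have h3 := mul_right_cancel he
        have h4 := inv_injective h3
        exact mul_right_cancel h4
      · intro h hh
        simp only [Finset.mem_filter, Finset.mem_univ, true_and] at hh
        refine ⟨y * h⁻¹ * y⁻¹, ?_, ?_⟩
        · simp only [Finset.mem_filter, Finset.mem_univ, true_and]
          apply QuotientGroup.eq.mpr
          group
          simpa using hh
        · group
    -- sum of fixed points
    have hfixsum : ∑ g : G, (Finset.univ.filter (fun a : G ⧸ H => g • a = a)).card = n := by
      have h1 : ∀ g : G, (Finset.univ.filter (fun a : G ⧸ H => g • a = a)).card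
          = ∑ a : G ⧸ H, if g • a = a then (1:ℕ) else 0 := by
        intro g; rw [Finset.card_filter]
      have h2 : ∀ a : G ⧸ H, (Finset.univ.filter (fun g : G => g • a = a)).card
          = ∑ g : G, if g • a = a then (1:ℕ) else 0 := by
        intro a; rw [Finset.card_filter]
      calc ∑ g : G, (Finset.univ.filter (fun a : G ⧸ H => g • a = a)).card
          = ∑ g : G, ∑ a : G ⧸ H, if g • a = a then (1:ℕ) else 0 :=
            Finset.sum_congr rfl (fun g _ => h1 g)
        _ = ∑ a : G ⧸ H, ∑ g : G, if g • a = a then (1:ℕ) else 0 :=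
            Finset.sum_comm
        _ = ∑ a : G ⧸ H, (Finset.univ.filter (fun g : G => g • a = a)).card :=
            Finset.sum_congr rfl (fun a _ => (h2 a).symm)
        _ = ∑ _a ∈ (Finset.univ : Finset (G ⧸ H)), Nat.card H :=
            Finset.sum_congr rfl (fun a _ => hstab a)
        _ = m * Nat.card H := by
            rw [Finset.sum_const, smul_eq_mul, Finset.card_univ, hcardΩ]
        _ = n := hmn
    -- the set of group elements moving the base point
    set Tset : Finset G := Finset.univ.filter (fun g : G => ¬ (g • x₀ = x₀)) with hTdef
    have hTcard : (Finset.univ.filter (fun g : G => g • x₀ = x₀)).card + Tset.card = n :=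
      Finset.card_filter_add_card_filter_not _
    have hTge : (n:ℝ)/2 ≤ (Tset.card : ℝ) := by
      have h1 : 2 * Nat.card H ≤ n := by
        calc 2 * Nat.card H ≤ m * Nat.card H := Nat.mul_le_mul_right _ hm2
          _ = n := hmn
      have h2 := hstab x₀
      have : Tset.card = n - Nat.card H := by omega
      rw [this]
      have hle : Nat.card H ≤ n := by omega
      push_cast [hle]
      have : (Nat.card H : ℝ) ≤ (n:ℝ)/2 := by
        have : (2:ℝ) * Nat.card H ≤ n := by exact_mod_cast h1
        linarith
      linarith
    -- pointwise indicator bound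
    have hpoint : ∀ (A : Finset (G ⧸ H)) (g : G),
        (if ({g • x₀} : Finset (G ⧸ H)) ⊆ A then (1:ℝ) else 0)
          - ∑ a ∈ Finset.univ, (if ({g • x₀, a, g • a} : Finset (G ⧸ H)) ⊆ A then (1:ℝ) else 0)
        ≤ (if g ∈ S A then (1:ℝ) else 0) := by
      intro A g
      have hsumnn : (0:ℝ) ≤ ∑ a ∈ Finset.univ,
          (if ({g • x₀, a, g • a} : Finset (G ⧸ H)) ⊆ A then (1:ℝ) else 0) :=
        Finset.sum_nonneg (fun a _ => by positivity)
      by_cases hgS : g ∈ S A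
      · have hg' := Finset.mem_filter.mp hgS
        have h2 : ∀ a ∈ Finset.univ,
            (if ({g • x₀, a, g • a} : Finset (G ⧸ H)) ⊆ A then (1:ℝ) else 0) = 0 := by
          intro a _
          rw [if_neg]
          intro hsub
          exact hg'.2.2 a (hsub (by simp)) (hsub (by simp))
        rw [if_pos hgS, if_pos (Finset.singleton_subset_iff.mpr hg'.2.1),
          Finset.sum_congr rfl h2]
        simp
      · rw [if_neg hgS]
        by_cases h1 : g • x₀ ∈ A
        · have hex : ∃ a ∈ A, g • a ∈ A := by
            by_contra hc
            push_neg at hc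
            exact hgS (Finset.mem_filter.mpr ⟨Finset.mem_univ g, h1, hc⟩)
          obtain ⟨a₀, ha₀, hga₀⟩ := hex
          have hterm : (if ({g • x₀, a₀, g • a₀} : Finset (G ⧸ H)) ⊆ A then (1:ℝ) else 0) = 1 := by
            rw [if_pos]
            simp [Finset.insert_subset_iff, h1, ha₀, hga₀]
          have hsum1 : (1:ℝ) ≤ ∑ a ∈ Finset.univ,
              (if ({g • x₀, a, g • a} : Finset (G ⧸ H)) ⊆ A then (1:ℝ) else 0) := by
            have hs := Finset.single_le_sum
              (f := fun a => (if ({g • x₀, a, g • a} : Finset (G ⧸ H)) ⊆ A then (1:ℝ) else 0))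
              (fun a _ => by positivity) (Finset.mem_univ a₀)
            exact le_trans (le_of_eq hterm.symm) hs
          have hle1 : (if ({g • x₀} : Finset (G ⧸ H)) ⊆ A then (1:ℝ) else 0) ≤ 1 := by
            split <;> norm_num
          linarith
        · rw [if_neg (fun hsub => h1 (Finset.singleton_subset_iff.mp hsub))]
          linarith
    -- per-A cardinality bound
    have hcardA : ∀ A : Finset (G ⧸ H),
        ∑ g ∈ Tset, ((if ({g • x₀} : Finset (G ⧸ H)) ⊆ A then (1:ℝ) else 0)
          - ∑ a ∈ Finset.univ, (if ({g • x₀, a, g • a} : Finset (G ⧸ H)) ⊆ A then (1:ℝ) else 0))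
        ≤ ((S A).card : ℝ) := by
      intro A
      calc ∑ g ∈ Tset, ((if ({g • x₀} : Finset (G ⧸ H)) ⊆ A then (1:ℝ) else 0)
            - ∑ a ∈ Finset.univ, (if ({g • x₀, a, g • a} : Finset (G ⧸ H)) ⊆ A then (1:ℝ) else 0))
          ≤ ∑ g ∈ Tset, (if g ∈ S A then (1:ℝ) else 0) :=
            Finset.sum_le_sum (fun g _ => hpoint A g)
        _ ≤ ∑ g ∈ Finset.univ, (if g ∈ S A then (1:ℝ) else 0) :=
            Finset.sum_le_sum_of_subset_of_nonneg (Finset.subset_univ _)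
              (fun g _ _ => by positivity)
        _ = ((S A).card : ℝ) := by
            rw [Finset.sum_ite_mem, Finset.univ_inter, Finset.sum_const, nsmul_eq_mul, mul_one]
    -- triple cardinalities
    have htwo : ∀ g ∈ Tset, ∀ a : G ⧸ H, 2 ≤ ({g • x₀, a, g • a} : Finset (G ⧸ H)).card := by
      intro g hg a
      have hgx : ¬ g • x₀ = x₀ := (Finset.mem_filter.mp hg).2
      by_cases hax : a = g • x₀
      · refine Finset.one_lt_card.mpr ⟨a, by simp, g • a, by simp, ?_⟩
        intro he
        apply hgx
        rw [hax] at he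
        exact (MulAction.injective g he).symm
      · exact Finset.one_lt_card.mpr ⟨g • x₀, by simp, a, by simp, fun he => hax he.symm⟩
    have hthree : ∀ g ∈ Tset, ∀ a : G ⧸ H, a ≠ g • x₀ → a ≠ x₀ → ¬ g • a = a →
        ({g • x₀, a, g • a} : Finset (G ⧸ H)).card = 3 := by
      intro g hg a h1 h2 h3
      have h4 : g • a ≠ g • x₀ := fun he => h2 (MulAction.injective g he)
      have e1 : ({g • x₀, a, g • a} : Finset (G ⧸ H)).card
          = ({a, g • a} : Finset (G ⧸ H)).card + 1 := by
        apply Finset.card_insert_of_notMem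
        simp only [Finset.mem_insert, Finset.mem_singleton]
        push_neg
        exact ⟨fun he => h1 he.symm, fun he => h4 he.symm⟩
      have e2 : ({a, g • a} : Finset (G ⧸ H)).card = ({g • a} : Finset (G ⧸ H)).card + 1 := by
        apply Finset.card_insert_of_notMem
        simp only [Finset.mem_singleton]
        exact fun he => h3 he.symm
      rw [e1, e2, Finset.card_singleton]
    -- per-g sum bound
    have hD : ∀ g ∈ Tset,
        ∑ a : G ⧸ H, p ^ (({g • x₀, a, g • a} : Finset (G ⧸ H)).card)
          ≤ (((Finset.univ.filter (fun a : G ⧸ H => g • a = a)).card : ℝ) + 2) * p^2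
            + (m:ℝ) * p^3 := by
      intro g hg
      set Fg : Finset (G ⧸ H) := Finset.univ.filter (fun a : G ⧸ H => g • a = a) with hFgdef
      set Bad : Finset (G ⧸ H) := insert (g • x₀) (insert x₀ Fg) with hBaddef
      have hsplit : ∑ a : G ⧸ H, p ^ (({g • x₀, a, g • a} : Finset (G ⧸ H)).card)
          = ∑ a ∈ Finset.univ \ Bad, p ^ (({g • x₀, a, g • a} : Finset (G ⧸ H)).card)
            + ∑ a ∈ Bad, p ^ (({g • x₀, a, g • a} : Finset (G ⧸ H)).card) :=
        (Finset.sum_sdiff (Finset.subset_univ Bad)).symm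
      rw [hsplit]
      have hb1 : ∑ a ∈ Bad, p ^ (({g • x₀, a, g • a} : Finset (G ⧸ H)).card)
          ≤ ((Fg.card : ℝ) + 2) * p^2 := by
        calc ∑ a ∈ Bad, p ^ (({g • x₀, a, g • a} : Finset (G ⧸ H)).card)
            ≤ ∑ _a ∈ Bad, p^2 :=
              Finset.sum_le_sum (fun a _ => pow_le_pow_of_le_one hp0.le hp1 (htwo g hg a))
          _ = (Bad.card : ℝ) * p^2 := by rw [Finset.sum_const, nsmul_eq_mul]
          _ ≤ ((Fg.card : ℝ) + 2) * p^2 := by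
              apply mul_le_mul_of_nonneg_right _ (by positivity)
              have hc1 : Bad.card ≤ Fg.card + 2 := by
                calc Bad.card ≤ (insert x₀ Fg).card + 1 := Finset.card_insert_le _ _
                  _ ≤ Fg.card + 1 + 1 := by
                      have := Finset.card_insert_le x₀ Fg
                      omega
                  _ = Fg.card + 2 := by omega
              push_cast
              exact_mod_cast hc1
      have hb2 : ∑ a ∈ Finset.univ \ Bad, p ^ (({g • x₀, a, g • a} : Finset (G ⧸ H)).card)
          ≤ (m:ℝ) * p^3 := by
        have he : ∀ a ∈ Finset.univ \ Bad,
            p ^ (({g • x₀, a, g • a} : Finset (G ⧸ H)).card) = p^3 := by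
          intro a ha
          rw [Finset.mem_sdiff] at ha
          have hmem := ha.2
          simp only [hBaddef, hFgdef, Finset.mem_insert, Finset.mem_filter, Finset.mem_univ,
            true_and] at hmem
          push_neg at hmem
          rw [hthree g hg a hmem.1 hmem.2.1 hmem.2.2]
        rw [Finset.sum_congr rfl he, Finset.sum_const, nsmul_eq_mul]
        apply mul_le_mul_of_nonneg_right _ (by positivity)
        have := Finset.card_le_univ (Finset.univ \ Bad)
        rw [hcardΩ] at this
        exact_mod_cast this
      linarith
    -- per-g expectation identity
    have hpsi : ∀ g : G,
        ∑ A ∈ Finset.univ.powerset, w A *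
          ((if ({g • x₀} : Finset (G ⧸ H)) ⊆ A then (1:ℝ) else 0)
            - ∑ a ∈ Finset.univ, (if ({g • x₀, a, g • a} : Finset (G ⧸ H)) ⊆ A then (1:ℝ) else 0))
        = p - ∑ a : G ⧸ H, p ^ (({g • x₀, a, g • a} : Finset (G ⧸ H)).card) := by
      intro g
      have hsplit : ∑ A ∈ Finset.univ.powerset, w A *
          ((if ({g • x₀} : Finset (G ⧸ H)) ⊆ A then (1:ℝ) else 0)
            - ∑ a ∈ Finset.univ, (if ({g • x₀, a, g • a} : Finset (G ⧸ H)) ⊆ A then (1:ℝ) else 0))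
          = (∑ A ∈ Finset.univ.powerset, w A * (if ({g • x₀} : Finset (G ⧸ H)) ⊆ A then (1:ℝ) else 0))
            - ∑ A ∈ Finset.univ.powerset, w A *
              ∑ a ∈ Finset.univ, (if ({g • x₀, a, g • a} : Finset (G ⧸ H)) ⊆ A then (1:ℝ) else 0) := by
        rw [← Finset.sum_sub_distrib]
        exact Finset.sum_congr rfl (fun A _ => by rw [mul_sub])
      rw [hsplit]
      have h1 : ∑ A ∈ Finset.univ.powerset, w A * (if ({g • x₀} : Finset (G ⧸ H)) ⊆ A then (1:ℝ) else 0) = p := by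
        rw [hmom]
        simp
      have h2 : ∑ A ∈ Finset.univ.powerset, w A *
            ∑ a ∈ Finset.univ, (if ({g • x₀, a, g • a} : Finset (G ⧸ H)) ⊆ A then (1:ℝ) else 0)
          = ∑ a : G ⧸ H, p ^ (({g • x₀, a, g • a} : Finset (G ⧸ H)).card) := by
        calc ∑ A ∈ Finset.univ.powerset, w A *
              ∑ a ∈ Finset.univ, (if ({g • x₀, a, g • a} : Finset (G ⧸ H)) ⊆ A then (1:ℝ) else 0)
            = ∑ A ∈ Finset.univ.powerset, ∑ a ∈ Finset.univ,
                w A * (if ({g • x₀, a, g • a} : Finset (G ⧸ H)) ⊆ A then (1:ℝ) else 0) :=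
              Finset.sum_congr rfl (fun A _ => Finset.mul_sum _ _ _)
          _ = ∑ a ∈ Finset.univ, ∑ A ∈ Finset.univ.powerset,
                w A * (if ({g • x₀, a, g • a} : Finset (G ⧸ H)) ⊆ A then (1:ℝ) else 0) :=
              Finset.sum_comm
          _ = ∑ a : G ⧸ H, p ^ (({g • x₀, a, g • a} : Finset (G ⧸ H)).card) :=
              Finset.sum_congr rfl (fun a _ => hmom _)
      rw [h1, h2]
    -- numeric helpers
    have hsp : s * p = 1/4 := by rw [hpdef]; field_simp
    have hp64 : p ≤ 1/64 := by
      rw [hpdef, div_le_div_iff₀ (by positivity) (by norm_num)]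
      nlinarith
    have hmr : (m:ℝ) = s^2 := hs2.symm
    have hpos : 0 ≤ p - 2*p^2 - (m:ℝ)*p^3 := by
      rw [hmr]
      have h1 : s^2 * p^3 = (s*p)^2 * p := by ring
      rw [h1, hsp]
      nlinarith [hp0.le, hp64]
    -- expectation lower bound
    have hfixT : ∑ g ∈ Tset, ((Finset.univ.filter (fun a : G ⧸ H => g • a = a)).card : ℝ) ≤ (n:ℝ) := by
      have h1 : ∑ g ∈ Tset, (Finset.univ.filter (fun a : G ⧸ H => g • a = a)).card ≤ n := by
        rw [← hfixsum]
        exact Finset.sum_le_sum_of_subset (Finset.subset_univ _)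
      exact_mod_cast h1
    set B : ℝ := (n:ℝ)/2 * (p - 2*p^2 - (m:ℝ)*p^3) - p^2 * n with hBdef2
    have hE : B ≤ ∑ A ∈ Finset.univ.powerset, w A * ((S A).card : ℝ) := by
      have step1 : ∑ A ∈ Finset.univ.powerset, w A *
            (∑ g ∈ Tset, ((if ({g • x₀} : Finset (G ⧸ H)) ⊆ A then (1:ℝ) else 0)
              - ∑ a ∈ Finset.univ, (if ({g • x₀, a, g • a} : Finset (G ⧸ H)) ⊆ A then (1:ℝ) else 0)))
          ≤ ∑ A ∈ Finset.univ.powerset, w A * ((S A).card : ℝ) :=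
        Finset.sum_le_sum (fun A _ => mul_le_mul_of_nonneg_left (hcardA A) (hw0 A).le)
      have step2 : ∑ A ∈ Finset.univ.powerset, w A *
            (∑ g ∈ Tset, ((if ({g • x₀} : Finset (G ⧸ H)) ⊆ A then (1:ℝ) else 0)
              - ∑ a ∈ Finset.univ, (if ({g • x₀, a, g • a} : Finset (G ⧸ H)) ⊆ A then (1:ℝ) else 0)))
          = ∑ g ∈ Tset, (p - ∑ a : G ⧸ H, p ^ (({g • x₀, a, g • a} : Finset (G ⧸ H)).card)) := by
        calc ∑ A ∈ Finset.univ.powerset, w A *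
              (∑ g ∈ Tset, ((if ({g • x₀} : Finset (G ⧸ H)) ⊆ A then (1:ℝ) else 0)
                - ∑ a ∈ Finset.univ, (if ({g • x₀, a, g • a} : Finset (G ⧸ H)) ⊆ A then (1:ℝ) else 0)))
            = ∑ A ∈ Finset.univ.powerset, ∑ g ∈ Tset, (w A *
                ((if ({g • x₀} : Finset (G ⧸ H)) ⊆ A then (1:ℝ) else 0)
                - ∑ a ∈ Finset.univ, (if ({g • x₀, a, g • a} : Finset (G ⧸ H)) ⊆ A then (1:ℝ) else 0))) :=
              Finset.sum_congr rfl (fun A _ => Finset.mul_sum _ _ _)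
          _ = ∑ g ∈ Tset, ∑ A ∈ Finset.univ.powerset, (w A *
                ((if ({g • x₀} : Finset (G ⧸ H)) ⊆ A then (1:ℝ) else 0)
                - ∑ a ∈ Finset.univ, (if ({g • x₀, a, g • a} : Finset (G ⧸ H)) ⊆ A then (1:ℝ) else 0))) :=
              Finset.sum_comm
          _ = ∑ g ∈ Tset, (p - ∑ a : G ⧸ H, p ^ (({g • x₀, a, g • a} : Finset (G ⧸ H)).card)) :=
              Finset.sum_congr rfl (fun g _ => hpsi g)
      have step3 : B ≤ ∑ g ∈ Tset, (p - ∑ a : G ⧸ H, p ^ (({g • x₀, a, g • a} : Finset (G ⧸ H)).card)) := by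
        have hg1 : ∀ g ∈ Tset,
            p - (((Finset.univ.filter (fun a : G ⧸ H => g • a = a)).card : ℝ) + 2) * p^2 - (m:ℝ)*p^3
            ≤ p - ∑ a : G ⧸ H, p ^ (({g • x₀, a, g • a} : Finset (G ⧸ H)).card) := by
          intro g hg
          linarith [hD g hg]
        have hexp : ∑ g ∈ Tset,
            (p - (((Finset.univ.filter (fun a : G ⧸ H => g • a = a)).card : ℝ) + 2) * p^2 - (m:ℝ)*p^3)
            = (Tset.card : ℝ) * (p - 2*p^2 - (m:ℝ)*p^3)
              - p^2 * ∑ g ∈ Tset, ((Finset.univ.filter (fun a : G ⧸ H => g • a = a)).card : ℝ) := by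
          have hptwise : ∀ g ∈ Tset,
              p - (((Finset.univ.filter (fun a : G ⧸ H => g • a = a)).card : ℝ) + 2) * p^2 - (m:ℝ)*p^3
              = (p - 2*p^2 - (m:ℝ)*p^3)
                - p^2 * ((Finset.univ.filter (fun a : G ⧸ H => g • a = a)).card : ℝ) := by
            intro g _
            ring
          rw [Finset.sum_congr rfl hptwise, Finset.sum_sub_distrib, Finset.sum_const,
            nsmul_eq_mul, ← Finset.mul_sum]
        have hlow : B ≤ (Tset.card : ℝ) * (p - 2*p^2 - (m:ℝ)*p^3)
            - p^2 * ∑ g ∈ Tset, ((Finset.univ.filter (fun a : G ⧸ H => g • a = a)).card : ℝ) := by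
          rw [hBdef2]
          have t1 : (n:ℝ)/2 * (p - 2*p^2 - (m:ℝ)*p^3) ≤ (Tset.card : ℝ) * (p - 2*p^2 - (m:ℝ)*p^3) :=
            mul_le_mul_of_nonneg_right hTge hpos
          have t2 : p^2 * ∑ g ∈ Tset, ((Finset.univ.filter (fun a : G ⧸ H => g • a = a)).card : ℝ)
              ≤ p^2 * n := mul_le_mul_of_nonneg_left hfixT (by positivity)
          linarith
        calc B ≤ _ := hlow
          _ = ∑ g ∈ Tset,
              (p - (((Finset.univ.filter (fun a : G ⧸ H => g • a = a)).card : ℝ) + 2) * p^2 - (m:ℝ)*p^3) :=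
            hexp.symm
          _ ≤ ∑ g ∈ Tset, (p - ∑ a : G ⧸ H, p ^ (({g • x₀, a, g • a} : Finset (G ⧸ H)).card)) :=
            Finset.sum_le_sum hg1
      rw [← step2] at step3
      exact le_trans step3 step1
    -- extraction
    have hEx : ∃ A, B ≤ ((S A).card : ℝ) := by
      have hsum1 : ∑ A ∈ Finset.univ.powerset, w A * B
          ≤ ∑ A ∈ Finset.univ.powerset, w A * ((S A).card : ℝ) := by
        rw [← Finset.sum_mul, hwsum, one_mul] at *
        · exact hE
      obtain ⟨A, -, hA⟩ := Finset.exists_le_of_sum_le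
        ⟨∅, Finset.empty_mem_powerset _⟩ hsum1
      exact ⟨A, le_of_mul_le_mul_left hA (hw0 A)⟩
    obtain ⟨A, hA⟩ := hEx
    refine ⟨S A, hSfree A, ?_⟩
    refine le_trans ?_ hA
    rw [hBdef2, hmr]
    have hn0 : (0:ℝ) ≤ (n:ℝ) := by positivity
    have key : (1/16) * s⁻¹ ≤ 1/2 * (p - 2*p^2 - s^2*p^3) - p^2 := by
      have h1 : s^2 * p^3 = (s*p)^2 * p := by ring
      rw [h1, hsp]
      have h2 : s⁻¹ = 4 * p := by
        rw [hpdef]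
        field_simp
      rw [h2]
      nlinarith [hp0.le, hp64]
    calc (1/16) * (n:ℝ) * s⁻¹ = (n:ℝ) * ((1/16) * s⁻¹) := by ring
      _ ≤ (n:ℝ) * (1/2 * (p - 2*p^2 - s^2*p^3) - p^2) := mul_le_mul_of_nonneg_left key hn0
      _ = (n:ℝ)/2 * (p - 2*p^2 - s^2*p^3) - p^2 * (n:ℝ) := by ring
end

section
/- Let G be a finite group of order n acting transitively on the set {1, 2, …, m} with m > 3, and let k be an integer with 3 ≤ k ≤ m − 1. For a subset T of {2, …, m}, define S_T = { g ∈ G : g(1) ∈ T }. Then there exists a subset T of {2, …, m} with |T| = k such that the number of solutions of the equation ab = c with a, b, c ∈ S_T (i.e., the number of pairs (a, b) ∈ S_T × S_T with ab ∈ S_T) is at most 4n²k³/(m − 3)³. -/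
open Finset

section ProductPoorAux

set_option linter.unusedSectionVars false

variable {G X : Type} [Group G] [Fintype G] [DecidableEq G]
  [Fintype X] [DecidableEq X] [MulAction G X]

lemma fiber_card_aux (htrans : MulAction.IsPretransitive G X) (x₀ y : X) :
    (univ.filter (fun b : G => b • x₀ = y)).card
      = (univ.filter (fun b : G => b • x₀ = x₀)).card := by
  obtain ⟨g, hg⟩ := htrans.exists_smul_eq x₀ y
  apply Finset.card_bij (fun b _ => g⁻¹ * b)
  · intro b hb
    simp only [mem_filter, mem_univ, true_and] at hb ⊢
    rw [mul_smul, hb, ← hg, inv_smul_smul]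
  · intro b₁ h₁ b₂ h₂ h
    exact mul_left_cancel h
  · intro b hb
    simp only [mem_filter, mem_univ, true_and] at hb
    refine ⟨g * b, ?_, by group⟩
    simp only [mem_filter, mem_univ, true_and, mul_smul, hb, hg]

lemma fix_card_aux (htrans : MulAction.IsPretransitive G X) (x₀ y : X) :
    (univ.filter (fun b : G => b • y = y)).card
      = (univ.filter (fun b : G => b • x₀ = x₀)).card := by
  obtain ⟨g, hg⟩ := htrans.exists_smul_eq x₀ y
  apply Finset.card_bij (fun b _ => g⁻¹ * b * g)
  · intro b hb
    simp only [mem_filter, mem_univ, true_and] at hb ⊢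
    rw [mul_smul, mul_smul, hg, hb, ← hg, inv_smul_smul]
  · intro b₁ h₁ b₂ h₂ h
    have := mul_right_cancel h
    exact mul_left_cancel this
  · intro b hb
    simp only [mem_filter, mem_univ, true_and] at hb
    refine ⟨g * b * g⁻¹, ?_, by group⟩
    simp only [mem_filter, mem_univ, true_and, mul_smul]
    rw [← hg, inv_smul_smul, hb, hg]

lemma card_eq_mul_aux (htrans : MulAction.IsPretransitive G X) (x₀ : X) :
    Fintype.card G
      = Fintype.card X * (univ.filter (fun b : G => b • x₀ = x₀)).card := by
  have h := Finset.card_eq_sum_card_fiberwise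
    (f := fun b : G => b • x₀) (s := univ) (t := univ) (fun x _ => mem_univ _)
  rw [← Finset.card_univ, h,
    Finset.sum_congr rfl (fun y _ => fiber_card_aux htrans x₀ y),
    Finset.sum_const, smul_eq_mul, Finset.card_univ]

end ProductPoorAux

lemma subset_count_aux {X : Type} [DecidableEq X] (U : Finset X) (k : ℕ) (A : Finset X) :
    ((U.powersetCard k).filter (fun T => A ⊆ T)).card
      ≤ (U.card - A.card).choose (k - A.card) := by
  rcases ((U.powersetCard k).filter (fun T => A ⊆ T)).eq_empty_or_nonempty with h | h
  · simp [h]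
  · obtain ⟨T₀, hT₀⟩ := h
    simp only [mem_filter, Finset.mem_powersetCard] at hT₀
    have hAU : A ⊆ U := hT₀.2.trans hT₀.1.1
    have hle : ((U.powersetCard k).filter (fun T => A ⊆ T)).card
        ≤ ((U \ A).powersetCard (k - A.card)).card := by
      apply Finset.card_le_card_of_injOn (fun T => T \ A)
      · intro T hT
        simp only [Finset.mem_coe, mem_filter, Finset.mem_powersetCard] at hT ⊢
        refine ⟨fun x hx => ?_, ?_⟩
        · simp only [mem_sdiff] at hx ⊢
          exact ⟨hT.1.1 hx.1, hx.2⟩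
        · rw [card_sdiff_of_subset hT.2, hT.1.2]
      · intro T1 h1 T2 h2 he
        simp only [coe_filter, Set.mem_setOf_eq] at h1 h2
        have := congrArg (· ∪ A) he
        simpa [Finset.sdiff_union_of_subset h1.2, Finset.sdiff_union_of_subset h2.2]
          using this
    rwa [Finset.card_powersetCard, card_sdiff_of_subset hAU] at hle

lemma choose_id2_aux (a c : ℕ) :
    (a+3).choose (c+3) * ((c+3)*(c+2)) = ((a+3)*(a+2)) * (a+1).choose (c+1) := by
  have h1 := Nat.add_one_mul_choose_eq (a+2) (c+2)
  have h2 := Nat.add_one_mul_choose_eq (a+1) (c+1)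
  simp only [Nat.succ_eq_add_one, Nat.add_assoc] at h1 h2
  calc (a+3).choose (c+3) * ((c+3)*(c+2))
      = ((a+3).choose (c+3) * (c+3)) * (c+2) := by ring
    _ = ((a+3) * (a+2).choose (c+2)) * (c+2) := by rw [← h1]
    _ = (a+3) * ((a+2).choose (c+2) * (c+2)) := by ring
    _ = (a+3) * ((a+2) * (a+1).choose (c+1)) := by rw [← h2]
    _ = ((a+3)*(a+2)) * (a+1).choose (c+1) := by ring

lemma choose_id3_aux (a c : ℕ) :
    (a+3).choose (c+3) * ((c+3)*(c+2)*(c+1)) = ((a+3)*(a+2)*(a+1)) * a.choose c := by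
  have h1 := choose_id2_aux a c
  have h2 := Nat.add_one_mul_choose_eq a c
  calc (a+3).choose (c+3) * ((c+3)*(c+2)*(c+1))
      = ((a+3).choose (c+3) * ((c+3)*(c+2))) * (c+1) := by ring
    _ = (((a+3)*(a+2)) * (a+1).choose (c+1)) * (c+1) := by rw [h1]
    _ = ((a+3)*(a+2)) * ((a+1).choose (c+1) * (c+1)) := by ring
    _ = ((a+3)*(a+2)) * ((a+1) * a.choose c) := by rw [← h2]
    _ = ((a+3)*(a+2)*(a+1)) * a.choose c := by ring

lemma pow4_aux (a : ℕ) : (a+1)^4 ≤ (a+4)*((a+3)*((a+2)*(a+1))) := by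
  have h : (a+1)^4 = (a+1)*((a+1)*((a+1)*(a+1))) := by ring
  rw [h]; gcongr <;> omega

lemma coeff_aux (s a c : ℕ) :
    2*((a+4)*s)*s*(a+1)^4*((c+3)*(c+2)) + ((a+4)*s)*((a+4)*s)*(a+1)^3*((c+3)*(c+2)*(c+1))
      ≤ 4*((a+4)*s)^2*(c+3)^3*((a+3)*(a+2)*(a+1)) := by
  have t1 : 2*((a+4)*s)*s*(a+1)^4*((c+3)*(c+2))
      ≤ 3*((a+4)*s)^2*(c+3)^3*((a+3)*(a+2)*(a+1)) := by
    calc 2*((a+4)*s)*s*(a+1)^4*((c+3)*(c+2))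
        = ((a+4)*s^2*(c+3)) * ((2*(c+2))*(a+1)^4) := by ring
      _ ≤ ((a+4)*s^2*(c+3)) * ((3*(c+3)^2)*((a+4)*((a+3)*((a+2)*(a+1))))) := by
          refine Nat.mul_le_mul_left _ (Nat.mul_le_mul ?_ (pow4_aux a))
          nlinarith
      _ = 3*((a+4)*s)^2*(c+3)^3*((a+3)*(a+2)*(a+1)) := by ring
  have t2 : ((a+4)*s)*((a+4)*s)*(a+1)^3*((c+3)*(c+2)*(c+1))
      ≤ ((a+4)*s)^2*(c+3)^3*((a+3)*(a+2)*(a+1)) := by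
    calc ((a+4)*s)*((a+4)*s)*(a+1)^3*((c+3)*(c+2)*(c+1))
        = ((a+4)*s)^2 * (((a+1)*(a+1)*(a+1))*((c+3)*(c+2)*(c+1))) := by ring
      _ ≤ ((a+4)*s)^2 * (((a+3)*(a+2)*(a+1))*((c+3)*(c+3)*(c+3))) := by
          refine Nat.mul_le_mul_left _ ?_
          gcongr <;> omega
      _ = ((a+4)*s)^2*(c+3)^3*((a+3)*(a+2)*(a+1)) := by ring
  calc 2*((a+4)*s)*s*(a+1)^4*((c+3)*(c+2)) + ((a+4)*s)*((a+4)*s)*(a+1)^3*((c+3)*(c+2)*(c+1))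
      ≤ 3*((a+4)*s)^2*(c+3)^3*((a+3)*(a+2)*(a+1)) + ((a+4)*s)^2*(c+3)^3*((a+3)*(a+2)*(a+1)) :=
        add_le_add t1 t2
    _ = 4*((a+4)*s)^2*(c+3)^3*((a+3)*(a+2)*(a+1)) := by ring

lemma num_aux (n s a c q : ℕ) (hn : n = (a+4)*s) (hc : c ≤ a)
    (h : q * ((a+3).choose (c+3))
        ≤ 2*(n*s)*((a+1).choose (c+1)) + n*n*(a.choose c)) :
    q * (a+1)^3 ≤ 4*n^2*(c+3)^3 := by
  set P3 := (a+3).choose (c+3) with hP3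
  set P2 := (a+1).choose (c+1) with hP2
  set P1 := a.choose c with hP1
  have hD : 0 < P3 * ((a+3)*(a+2)*(a+1)) := by
    have : 0 < P3 := Nat.choose_pos (by omega)
    positivity
  refine Nat.le_of_mul_le_mul_right ?_ hD
  calc q * (a+1)^3 * (P3 * ((a+3)*(a+2)*(a+1)))
      = (q * P3) * ((a+1)^3*((a+3)*(a+2)*(a+1))) := by ring
    _ ≤ (2*(n*s)*P2 + n*n*P1) * ((a+1)^3*((a+3)*(a+2)*(a+1))) :=
        Nat.mul_le_mul_right _ h
    _ = 2*n*s*(a+1)^4 * (((a+3)*(a+2))*P2) + n*n*(a+1)^3 * (((a+3)*(a+2)*(a+1))*P1) := by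
        ring
    _ = 2*n*s*(a+1)^4 * (P3*((c+3)*(c+2))) + n*n*(a+1)^3 * (P3*((c+3)*(c+2)*(c+1))) := by
        rw [← choose_id2_aux a c, ← choose_id3_aux a c]
    _ = (2*n*s*(a+1)^4*((c+3)*(c+2)) + n*n*(a+1)^3*((c+3)*(c+2)*(c+1))) * P3 := by ring
    _ ≤ (4*n^2*(c+3)^3*((a+3)*(a+2)*(a+1))) * P3 := by
        refine Nat.mul_le_mul_right _ ?_
        subst hn
        exact coeff_aux s a c
    _ = 4*n^2*(c+3)^3 * (P3 * ((a+3)*(a+2)*(a+1))) := by ring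

/-- Let `G` be a finite group of order `n` acting transitively on a set `X` of size `m > 3`
(with distinguished base point `x₀`, playing the role of the point `1` of `{1, …, m}`),
and let `3 ≤ k ≤ m - 1`. Then there is a subset `T` of `X \ {x₀}` with `|T| = k` such
that, setting `S_T = {g ∈ G : g • x₀ ∈ T}`, the number of pairs `(a, b) ∈ S_T × S_T` with
`a * b ∈ S_T` is at most `4 * n² * k³ / (m - 3)³`. -/
theorem exists_product_poor_union_of_cosets
    {G X : Type} [Group G] [Fintype G] [DecidableEq G]
    [Fintype X] [DecidableEq X] [MulAction G X]
    (htrans : MulAction.IsPretransitive G X)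
    (n m k : ℕ) (hn : n = Fintype.card G) (hm : m = Fintype.card X)
    (hm3 : 3 < m) (x₀ : X) (hk3 : 3 ≤ k) (hkm : k ≤ m - 1) :
    ∃ T : Finset X, x₀ ∉ T ∧ T.card = k ∧
      ((((Finset.univ.filter (fun g : G => g • x₀ ∈ T)) ×ˢ
          (Finset.univ.filter (fun g : G => g • x₀ ∈ T))).filter
          (fun ab => ab.1 * ab.2 ∈ Finset.univ.filter (fun g : G => g • x₀ ∈ T))).card : ℝ)
        ≤ 4 * (n : ℝ) ^ 2 * (k : ℝ) ^ 3 / ((m : ℝ) - 3) ^ 3 := by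
  obtain ⟨a, rfl⟩ : ∃ a, m = a + 4 := ⟨m - 4, by omega⟩
  obtain ⟨c, rfl⟩ : ∃ c, k = c + 3 := ⟨k - 3, by omega⟩
  have hca : c ≤ a := by omega
  set s := (univ.filter (fun b : G => b • x₀ = x₀)).card with hs
  have hns : n = (a+4)*s := by
    rw [hn, card_eq_mul_aux htrans x₀, ← hm]
  set U : Finset X := univ.erase x₀ with hUdef
  have hUcard : U.card = a + 3 := by
    rw [hUdef, Finset.card_erase_of_mem (mem_univ _), Finset.card_univ, ← hm]
    omega
  set P := U.powersetCard (c+3) with hPdef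
  have hPcard : P.card = (a+3).choose (c+3) := by
    rw [hPdef, Finset.card_powersetCard, hUcard]
  have hPne : P.Nonempty := Finset.powersetCard_nonempty.mpr (by omega)
  set cnt : Finset X → ℕ := fun T =>
    ((((Finset.univ.filter (fun g : G => g • x₀ ∈ T)) ×ˢ
        (Finset.univ.filter (fun g : G => g • x₀ ∈ T))).filter
        (fun ab => ab.1 * ab.2 ∈ Finset.univ.filter (fun g : G => g • x₀ ∈ T))).card)
    with hcntdef
  set Ap : G × G → Finset X := fun p =>
    insert (p.1 • x₀) (insert (p.2 • x₀) {(p.1 * p.2) • x₀}) with hApdef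
  have hcnt_eq : ∀ T : Finset X,
      cnt T = ((univ : Finset (G × G)).filter (fun p => Ap p ⊆ T)).card := by
    intro T
    rw [hcntdef]
    apply congrArg Finset.card
    ext ⟨g1, g2⟩
    simp [hApdef, Finset.insert_subset_iff, Finset.mem_product, and_assoc]
  -- swap the double counting
  have hswap : ∑ T ∈ P, cnt T
      = ∑ p : G × G, (P.filter (fun T => Ap p ⊆ T)).card := by
    have h1 : ∀ T : Finset X, cnt T = ∑ p : G × G, if Ap p ⊆ T then 1 else 0 := by
      intro T; rw [hcnt_eq T, Finset.card_filter]
    calc ∑ T ∈ P, cnt T = ∑ T ∈ P, ∑ p : G × G, if Ap p ⊆ T then 1 else 0 :=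
          Finset.sum_congr rfl (fun T _ => h1 T)
      _ = ∑ p : G × G, ∑ T ∈ P, if Ap p ⊆ T then 1 else 0 := Finset.sum_comm
      _ = ∑ p : G × G, (P.filter (fun T => Ap p ⊆ T)).card :=
          Finset.sum_congr rfl (fun p _ => (Finset.card_filter _ _).symm)
  -- the three classes of pairs
  set S1 : Finset (G × G) := univ.filter (fun p => p.1 • x₀ = p.2 • x₀) with hS1def
  set S2 : Finset (G × G) :=
    (univ.filter (fun p : G × G => ¬ p.1 • x₀ = p.2 • x₀)).filter
      (fun p => p.2 • x₀ = (p.1 * p.2) • x₀) with hS2def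
  set S3 : Finset (G × G) :=
    (univ.filter (fun p : G × G => ¬ p.1 • x₀ = p.2 • x₀)).filter
      (fun p => ¬ p.2 • x₀ = (p.1 * p.2) • x₀) with hS3def
  -- bounds on the number of k-sets containing Ap p, per class
  have hfb1 : ∀ p ∈ S1, (P.filter (fun T => Ap p ⊆ T)).card ≤ (a+1).choose (c+1) := by
    intro p hp
    rw [hS1def, mem_filter] at hp
    have hp1 : p.1 • x₀ = p.2 • x₀ := hp.2
    rcases (P.filter (fun T => Ap p ⊆ T)).eq_empty_or_nonempty with he | hne
    · rw [he, Finset.card_empty]; exact Nat.zero_le _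
    · obtain ⟨T, hT⟩ := hne
      rw [mem_filter, hPdef, Finset.mem_powersetCard] at hT
      have hyT : p.2 • x₀ ∈ T := hT.2 (by simp [hApdef])
      have hyU := hT.1.1 hyT
      have hy0 : p.2 • x₀ ≠ x₀ := by
        rw [hUdef] at hyU; exact (Finset.mem_erase.mp hyU).1
      have hxz : p.1 • x₀ ≠ (p.1 * p.2) • x₀ := by
        intro h
        apply hy0
        rw [mul_smul] at h
        exact (MulAction.injective p.1 h).symm
      have hAcard : (Ap p).card = 2 := by
        rw [hApdef]
        simp only
        rw [← hp1, Finset.insert_idem,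
          Finset.card_insert_of_notMem (by simpa using hxz), Finset.card_singleton]
      have hle := subset_count_aux U (c+3) (Ap p)
      rw [hAcard, hUcard, show a + 3 - 2 = a + 1 by omega,
        show c + 3 - 2 = c + 1 by omega, ← hPdef] at hle
      exact hle
  have hfb2 : ∀ p ∈ S2, (P.filter (fun T => Ap p ⊆ T)).card ≤ (a+1).choose (c+1) := by
    intro p hp
    rw [hS2def, mem_filter, mem_filter] at hp
    have hp1 : ¬ p.1 • x₀ = p.2 • x₀ := hp.1.2
    have hp2 : p.2 • x₀ = (p.1 * p.2) • x₀ := hp.2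
    have hAcard : (Ap p).card = 2 := by
      rw [hApdef]
      simp only
      rw [← hp2]
      have e : ({p.1 • x₀, p.2 • x₀, p.2 • x₀} : Finset X) = {p.1 • x₀, p.2 • x₀} := by
        congr 1
        exact Finset.insert_eq_self.mpr (Finset.mem_singleton_self _)
      rw [e]
      exact Finset.card_pair hp1
    have hle := subset_count_aux U (c+3) (Ap p)
    rw [hAcard, hUcard, show a + 3 - 2 = a + 1 by omega,
      show c + 3 - 2 = c + 1 by omega, ← hPdef] at hle
    exact hle
  have hfb3 : ∀ p ∈ S3, (P.filter (fun T => Ap p ⊆ T)).card ≤ a.choose c := by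
    intro p hp
    rw [hS3def, mem_filter, mem_filter] at hp
    have hp1 : ¬ p.1 • x₀ = p.2 • x₀ := hp.1.2
    have hp2 : ¬ p.2 • x₀ = (p.1 * p.2) • x₀ := hp.2
    rcases (P.filter (fun T => Ap p ⊆ T)).eq_empty_or_nonempty with he | hne
    · rw [he, Finset.card_empty]; exact Nat.zero_le _
    · obtain ⟨T, hT⟩ := hne
      rw [mem_filter, hPdef, Finset.mem_powersetCard] at hT
      have hyT : p.2 • x₀ ∈ T := hT.2 (by simp [hApdef])
      have hyU := hT.1.1 hyT
      have hy0 : p.2 • x₀ ≠ x₀ := by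
        rw [hUdef] at hyU; exact (Finset.mem_erase.mp hyU).1
      have hxz : p.1 • x₀ ≠ (p.1 * p.2) • x₀ := by
        intro h
        apply hy0
        rw [mul_smul] at h
        exact (MulAction.injective p.1 h).symm
      have hAcard : (Ap p).card = 3 := by
        rw [hApdef]
        simp only
        rw [Finset.card_insert_of_notMem (by simp [hp1, hxz]),
          Finset.card_insert_of_notMem (by simpa using hp2), Finset.card_singleton]
      have hle := subset_count_aux U (c+3) (Ap p)
      rw [hAcard, hUcard, show a + 3 - 3 = a by omega,
        show c + 3 - 3 = c by omega, ← hPdef] at hle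
      exact hle
  -- class sizes
  have hS1card : S1.card = n * s := by
    rw [hS1def, Finset.card_filter, Fintype.sum_prod_type]
    have hinner : ∀ g1 : G,
        (∑ g2 : G, if g1 • x₀ = g2 • x₀ then 1 else 0) = s := by
      intro g1
      rw [← Finset.card_filter, hs, ← fiber_card_aux htrans x₀ (g1 • x₀)]
      apply congrArg Finset.card
      ext g2
      simp [eq_comm]
    rw [Finset.sum_congr rfl (fun g1 _ => hinner g1), Finset.sum_const,
      smul_eq_mul, Finset.card_univ, hn]
  have hS2card : S2.card ≤ n * s := by
    have hsub : S2 ⊆ univ.filter (fun p : G × G => p.2 • x₀ = (p.1 * p.2) • x₀) := by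
      intro p hp
      rw [hS2def, mem_filter, mem_filter] at hp
      rw [mem_filter]
      exact ⟨mem_univ _, hp.2⟩
    refine (Finset.card_le_card hsub).trans ?_
    rw [Finset.card_filter, Fintype.sum_prod_type, Finset.sum_comm]
    have hinner : ∀ g2 : G,
        (∑ g1 : G, if g2 • x₀ = (g1 * g2) • x₀ then 1 else 0) = s := by
      intro g2
      rw [← Finset.card_filter, hs, ← fix_card_aux htrans x₀ (g2 • x₀)]
      apply congrArg Finset.card
      ext g1
      simp [mul_smul, eq_comm]
    rw [Finset.sum_congr rfl (fun g2 _ => hinner g2), Finset.sum_const,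
      smul_eq_mul, Finset.card_univ, hn]
  have hS3card : S3.card ≤ n * n := by
    calc S3.card ≤ (univ : Finset (G × G)).card :=
          Finset.card_le_card (fun p _ => mem_univ p)
      _ = n * n := by rw [Finset.card_univ, Fintype.card_prod, hn]
  -- total bound on the double count
  have hsum : ∑ T ∈ P, cnt T
      ≤ 2*(n*s)*((a+1).choose (c+1)) + n*n*(a.choose c) := by
    rw [hswap]
    rw [← Finset.sum_filter_add_sum_filter_not (univ : Finset (G × G))
      (fun p => p.1 • x₀ = p.2 • x₀) (fun p => (P.filter (fun T => Ap p ⊆ T)).card)]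
    rw [← Finset.sum_filter_add_sum_filter_not
      ((univ : Finset (G × G)).filter (fun p => ¬ p.1 • x₀ = p.2 • x₀))
      (fun p => p.2 • x₀ = (p.1 * p.2) • x₀)
      (fun p => (P.filter (fun T => Ap p ⊆ T)).card)]
    have h1 : ∑ p ∈ S1, (P.filter (fun T => Ap p ⊆ T)).card
        ≤ (n*s) * ((a+1).choose (c+1)) := by
      refine le_trans (Finset.sum_le_card_nsmul S1 _ _ hfb1) ?_
      rw [smul_eq_mul, hS1card]
    have h2 : ∑ p ∈ S2, (P.filter (fun T => Ap p ⊆ T)).card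
        ≤ (n*s) * ((a+1).choose (c+1)) := by
      refine le_trans (Finset.sum_le_card_nsmul S2 _ _ hfb2) ?_
      rw [smul_eq_mul]
      exact Nat.mul_le_mul_right _ hS2card
    have h3 : ∑ p ∈ S3, (P.filter (fun T => Ap p ⊆ T)).card
        ≤ (n*n) * (a.choose c) := by
      refine le_trans (Finset.sum_le_card_nsmul S3 _ _ hfb3) ?_
      rw [smul_eq_mul]
      exact Nat.mul_le_mul_right _ hS3card
    calc ∑ p ∈ S1, (P.filter (fun T => Ap p ⊆ T)).card
          + (∑ p ∈ S2, (P.filter (fun T => Ap p ⊆ T)).card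
            + ∑ p ∈ S3, (P.filter (fun T => Ap p ⊆ T)).card)
        ≤ (n*s) * ((a+1).choose (c+1))
          + ((n*s) * ((a+1).choose (c+1)) + (n*n) * (a.choose c)) :=
          add_le_add h1 (add_le_add h2 h3)
      _ = 2*(n*s)*((a+1).choose (c+1)) + n*n*(a.choose c) := by ring
  -- pick a minimizing T
  obtain ⟨T, hTP, hTmin⟩ := Finset.exists_min_image P cnt hPne
  have hkey : cnt T * ((a+3).choose (c+3))
      ≤ 2*(n*s)*((a+1).choose (c+1)) + n*n*(a.choose c) := by
    have h := Finset.card_nsmul_le_sum P cnt (cnt T) (fun i hi => hTmin i hi)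
    rw [smul_eq_mul, hPcard, mul_comm] at h
    exact h.trans hsum
  have hnat : cnt T * (a+1)^3 ≤ 4*n^2*(c+3)^3 :=
    num_aux n s a c (cnt T) hns hca hkey
  rw [hPdef, Finset.mem_powersetCard] at hTP
  have hx₀T : x₀ ∉ T := by
    intro hx
    have := hTP.1 hx
    rw [hUdef] at this
    exact (Finset.mem_erase.mp this).1 rfl
  refine ⟨T, hx₀T, hTP.2, ?_⟩
  show (cnt T : ℝ) ≤ _
  have hpos : (0:ℝ) < (((a+4 : ℕ) : ℝ) - 3)^3 := by
    have h : (((a+4 : ℕ) : ℝ) - 3) = (a : ℝ) + 1 := by push_cast; ring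
    rw [h]; positivity
  rw [le_div_iff₀ hpos]
  have h : (((a+4 : ℕ) : ℝ) - 3) = (a : ℝ) + 1 := by push_cast; ring
  rw [h]
  calc (cnt T : ℝ) * ((a : ℝ) + 1)^3 = ((cnt T * (a+1)^3 : ℕ) : ℝ) := by push_cast; ring
    _ ≤ ((4*n^2*(c+3)^3 : ℕ) : ℝ) := by exact_mod_cast hnat
    _ = 4 * (n : ℝ)^2 * (((c+3 : ℕ)) : ℝ)^3 := by push_cast; ring
end

section
/- Let G be a finite group of order n acting transitively on the set {1, 2, …, m} with m ≥ 4, and let k be an integer with 3 ≤ k ≤ m − 1. Then the sum over all subsets T of {2, …, m} with |T| = k of the number of pairs (a, b) ∈ G × G such that a(1) ∈ T, b(1) ∈ T, and (ab)(1) ∈ T is at most 4n²·C(m − 4, k − 3), where C(·,·) denotes the binomial coefficient. -/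
-- counting lemma: subsets of S of size k containing s
lemma count_supersets_le {X : Type} [DecidableEq X] (S s : Finset X) (k : ℕ) (hs : s ⊆ S) :
    ((S.powersetCard k).filter fun T => s ⊆ T).card ≤ (S.card - s.card).choose (k - s.card) := by
  calc ((S.powersetCard k).filter fun T => s ⊆ T).card
      ≤ ((S \ s).powersetCard (k - s.card)).card := by
        apply Finset.card_le_card_of_injOn (fun T => T \ s)
        · intro T hT
          simp only [Finset.mem_coe, Finset.mem_filter, Finset.mem_powersetCard] at hT ⊢
          obtain ⟨⟨hTS, hTk⟩, hsT⟩ := hT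
          exact ⟨Finset.sdiff_subset_sdiff hTS le_rfl, by rw [Finset.card_sdiff_of_subset hsT, hTk]⟩
        · intro T1 h1 T2 h2 h
          simp only [Finset.coe_filter, Set.mem_setOf_eq] at h1 h2
          have e1 := Finset.sdiff_union_of_subset h1.2
          have e2 := Finset.sdiff_union_of_subset h2.2
          simp only at h
          rw [← e1, ← e2, h]
    _ = (S.card - s.card).choose (k - s.card) := by
        rw [Finset.card_powersetCard, Finset.card_sdiff_of_subset hs]

lemma coset_card_eq {G X : Type} [Group G] [Fintype G] [DecidableEq G]
    [Fintype X] [DecidableEq X] [MulAction G X]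
    (x₀ y : X) (g : G) (hg : g • x₀ = y) :
    (Finset.univ.filter fun b : G => b • x₀ = y).card
      = (Finset.univ.filter fun c : G => c • x₀ = x₀).card := by
  apply Finset.card_bij' (fun b _ => g⁻¹ * b) (fun c _ => g * c)
  · intro b hb
    simp only [Finset.mem_filter, Finset.mem_univ, true_and] at hb ⊢
    rw [mul_smul, hb, ← hg, inv_smul_smul]
  · intro c hc
    simp only [Finset.mem_filter, Finset.mem_univ, true_and] at hc ⊢
    rw [mul_smul, hc, hg]
  · intro b _; group
  · intro c _; group

lemma stab_card_eq {G X : Type} [Group G] [Fintype G] [DecidableEq G]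
    [Fintype X] [DecidableEq X] [MulAction G X]
    (x₀ y : X) (g : G) (hg : g • x₀ = y) :
    (Finset.univ.filter fun c : G => c • y = y).card
      = (Finset.univ.filter fun c : G => c • x₀ = x₀).card := by
  apply Finset.card_bij' (fun c _ => g⁻¹ * c * g) (fun c _ => g * c * g⁻¹)
  · intro c hc
    simp only [Finset.mem_filter, Finset.mem_univ, true_and] at hc ⊢
    rw [mul_smul, mul_smul, hg, hc, ← hg, inv_smul_smul]
  · intro c hc
    simp only [Finset.mem_filter, Finset.mem_univ, true_and] at hc ⊢
    rw [mul_smul, mul_smul, ← hg, inv_smul_smul, hc, hg]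
  · intro c _; group
  · intro c _; group

/-- Let `G` be a finite group of order `n` acting transitively on a set `X` of size `m ≥ 4`
(with distinguished base point `x₀`, playing the role of the point `1` of `{1, …, m}`),
and let `3 ≤ k ≤ m - 1`. Then the sum, over all subsets `T` of `X \ {x₀}` with `|T| = k`,
of the number of pairs `(a, b) ∈ G × G` with `a • x₀ ∈ T`, `b • x₀ ∈ T` and
`(a * b) • x₀ ∈ T`, is at most `4 * n² * C(m - 4, k - 3)`. -/
theorem sum_over_subsets_count_bound
    {G X : Type} [Group G] [Fintype G] [DecidableEq G]
    [Fintype X] [DecidableEq X] [MulAction G X]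
    (htrans : MulAction.IsPretransitive G X)
    (n m k : ℕ) (hn : n = Fintype.card G) (hm : m = Fintype.card X)
    (hm4 : 4 ≤ m) (x₀ : X) (hk3 : 3 ≤ k) (hkm : k ≤ m - 1) :
    ∑ T ∈ (Finset.univ.erase x₀).powersetCard k,
        ((Finset.univ : Finset (G × G)).filter
          (fun ab => ab.1 • x₀ ∈ T ∧ ab.2 • x₀ ∈ T ∧ (ab.1 * ab.2) • x₀ ∈ T)).card
      ≤ 4 * n ^ 2 * Nat.choose (m - 4) (k - 3) := by
  classical
  set S : Finset X := Finset.univ.erase x₀ with hS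
  set d : ℕ := (Finset.univ.filter fun c : G => c • x₀ = x₀).card with hd
  set C3 : ℕ := Nat.choose (m - 4) (k - 3) with hC3
  set C2 : ℕ := Nat.choose (m - 3) (k - 2) with hC2
  have hScard : S.card = m - 1 := by
    rw [hS, Finset.card_erase_of_mem (Finset.mem_univ _), Finset.card_univ, hm]
  -- orbit-stabilizer: n = m * d
  have hcoset : ∀ y : X, (Finset.univ.filter fun b : G => b • x₀ = y).card = d := by
    intro y
    obtain ⟨g, hg⟩ := htrans.exists_smul_eq x₀ y
    exact coset_card_eq x₀ y g hg
  have hstab : ∀ y : X, (Finset.univ.filter fun c : G => c • y = y).card = d := by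
    intro y
    obtain ⟨g, hg⟩ := htrans.exists_smul_eq x₀ y
    exact stab_card_eq x₀ y g hg
  have hnm : n = m * d := by
    have := Finset.card_eq_sum_card_fiberwise
      (f := fun b : G => b • x₀) (s := Finset.univ) (t := Finset.univ)
      (fun x _ => Finset.mem_univ _)
    rw [Finset.card_univ, ← hn] at this
    rw [this]
    simp only [hcoset]
    rw [Finset.sum_const, Finset.card_univ, ← hm, smul_eq_mul]
  -- swap the sums
  rw [show (∑ T ∈ S.powersetCard k,
        ((Finset.univ : Finset (G × G)).filter
          (fun ab => ab.1 • x₀ ∈ T ∧ ab.2 • x₀ ∈ T ∧ (ab.1 * ab.2) • x₀ ∈ T)).card)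
      = ∑ ab : G × G, ((S.powersetCard k).filter
          (fun T => ab.1 • x₀ ∈ T ∧ ab.2 • x₀ ∈ T ∧ (ab.1 * ab.2) • x₀ ∈ T)).card from by
    simp_rw [Finset.card_filter]
    exact Finset.sum_comm]
  -- pointwise bound
  have hpoint : ∀ ab : G × G,
      ((S.powersetCard k).filter
          (fun T => ab.1 • x₀ ∈ T ∧ ab.2 • x₀ ∈ T ∧ (ab.1 * ab.2) • x₀ ∈ T)).card
      ≤ (if ab.1 • x₀ = ab.2 • x₀ then C2 else 0)
        + (if (ab.1 * ab.2) • x₀ = ab.2 • x₀ then C2 else 0) + C3 := by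
    rintro ⟨a, b⟩
    simp only
    by_cases hbad : a • x₀ = x₀ ∨ b • x₀ = x₀ ∨ (a * b) • x₀ = x₀
    · -- some point equals x₀ : the filter is empty
      have : ((S.powersetCard k).filter
          (fun T => a • x₀ ∈ T ∧ b • x₀ ∈ T ∧ (a * b) • x₀ ∈ T)) = ∅ := by
        apply Finset.filter_eq_empty_iff.mpr
        intro T hT
        rw [Finset.mem_powersetCard] at hT
        have hx₀ : x₀ ∉ T := fun h => (Finset.mem_erase.mp (hT.1 h)).1 rfl
        rintro ⟨h1, h2, h3⟩
        rcases hbad with h | h | h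
        · exact hx₀ (h ▸ h1)
        · exact hx₀ (h ▸ h2)
        · exact hx₀ (h ▸ h3)
      rw [this]; simp
    push_neg at hbad
    obtain ⟨hax, hbx, habx⟩ := hbad
    -- now all three points are ≠ x₀
    have hmemS : ∀ y : X, y ≠ x₀ → y ∈ S := fun y hy =>
      Finset.mem_erase.mpr ⟨hy, Finset.mem_univ _⟩
    have key : ∀ s : Finset X, s ⊆ S →
        (∀ T : Finset X, (a • x₀ ∈ T ∧ b • x₀ ∈ T ∧ (a * b) • x₀ ∈ T) → s ⊆ T) →
        ((S.powersetCard k).filter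
          (fun T => a • x₀ ∈ T ∧ b • x₀ ∈ T ∧ (a * b) • x₀ ∈ T)).card
        ≤ (S.card - s.card).choose (k - s.card) := by
      intro s hsS himp
      refine le_trans (Finset.card_le_card ?_) (count_supersets_le S s k hsS)
      intro T hT
      rw [Finset.mem_filter] at hT ⊢
      exact ⟨hT.1, himp T hT.2⟩
    by_cases h1 : a • x₀ = b • x₀
    · -- bound by C2 using {a•x₀, (a*b)•x₀}
      have hne : a • x₀ ≠ (a * b) • x₀ := by
        intro h
        rw [mul_smul] at h
        exact hbx (smul_left_cancel a h).symm
      have hcard : ({a • x₀, (a * b) • x₀} : Finset X).card = 2 :=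
        Finset.card_pair hne
      have := key {a • x₀, (a * b) • x₀}
        (by intro y hy
            simp only [Finset.mem_insert, Finset.mem_singleton] at hy
            rcases hy with rfl | rfl
            · exact hmemS _ hax
            · exact hmemS _ habx)
        (by intro T hT
            rw [Finset.insert_subset_iff, Finset.singleton_subset_iff]
            exact ⟨hT.1, hT.2.2⟩)
      rw [hcard, hScard] at this
      have he : m - 1 - 2 = m - 3 := by omega
      rw [he] at this
      rw [if_pos h1]
      omega
    · by_cases h2 : (a * b) • x₀ = b • x₀
      · -- bound by C2 using {a•x₀, b•x₀}
        have hcard : ({a • x₀, b • x₀} : Finset X).card = 2 :=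
          Finset.card_pair h1
        have := key {a • x₀, b • x₀}
          (by intro y hy
              simp only [Finset.mem_insert, Finset.mem_singleton] at hy
              rcases hy with rfl | rfl
              · exact hmemS _ hax
              · exact hmemS _ hbx)
          (by intro T hT
              rw [Finset.insert_subset_iff, Finset.singleton_subset_iff]
              exact ⟨hT.1, hT.2.1⟩)
        rw [hcard, hScard] at this
        have he : m - 1 - 2 = m - 3 := by omega
        rw [he] at this
        rw [if_neg h1, if_pos h2]
        omega
      · -- all three distinct: bound by C3
        have h3 : a • x₀ ≠ (a * b) • x₀ := by
          intro h
          rw [mul_smul] at h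
          exact hbx (smul_left_cancel a h).symm
        have hcard : ({a • x₀, b • x₀, (a * b) • x₀} : Finset X).card = 3 := by
          rw [Finset.card_insert_of_notMem (by
            simp only [Finset.mem_insert, Finset.mem_singleton]
            push_neg
            exact ⟨h1, h3⟩), Finset.card_pair (fun h => h2 h.symm)]
        have := key {a • x₀, b • x₀, (a * b) • x₀}
          (by intro y hy
              simp only [Finset.mem_insert, Finset.mem_singleton] at hy
              rcases hy with rfl | rfl | rfl
              · exact hmemS _ hax
              · exact hmemS _ hbx
              · exact hmemS _ habx)
          (by intro T hT
              rw [Finset.insert_subset_iff, Finset.insert_subset_iff,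
                Finset.singleton_subset_iff]
              exact ⟨hT.1, hT.2.1, hT.2.2⟩)
        rw [hcard, hScard] at this
        have he : m - 1 - 3 = m - 4 := by omega
        rw [he] at this
        omega
  refine le_trans (Finset.sum_le_sum fun ab _ => hpoint ab) ?_
  rw [Finset.sum_add_distrib, Finset.sum_add_distrib]
  -- compute the three sums
  have hE1 : (∑ ab : G × G, if ab.1 • x₀ = ab.2 • x₀ then C2 else 0) = n * d * C2 := by
    rw [Fintype.sum_prod_type]
    have : ∀ a : G, (∑ b : G, if a • x₀ = b • x₀ then C2 else 0) = d * C2 := by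
      intro a
      rw [← Finset.sum_filter]
      simp only [Finset.sum_const, smul_eq_mul]
      congr 1
      rw [← hcoset (a • x₀)]
      congr 1
      ext b
      simp [eq_comm]
    simp only [this, Finset.sum_const, Finset.card_univ, smul_eq_mul, ← hn, mul_assoc]
  have hE2 : (∑ ab : G × G, if (ab.1 * ab.2) • x₀ = ab.2 • x₀ then C2 else 0)
      = n * d * C2 := by
    rw [Fintype.sum_prod_type_right]
    have : ∀ b : G, (∑ a : G, if (a * b) • x₀ = b • x₀ then C2 else 0) = d * C2 := by
      intro b
      rw [← Finset.sum_filter]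
      simp only [Finset.sum_const, smul_eq_mul]
      congr 1
      rw [← hstab (b • x₀)]
      congr 1
      ext a
      simp [mul_smul]
    simp only [this, Finset.sum_const, Finset.card_univ, smul_eq_mul, ← hn, mul_assoc]
  have hE3 : (∑ _ab : G × G, C3) = n ^ 2 * C3 := by
    rw [Finset.sum_const, Finset.card_univ, Fintype.card_prod, smul_eq_mul, ← hn]
    ring
  rw [hE1, hE2, hE3]
  have h4 : 4 * n ^ 2 * C3 = 4 * (n ^ 2 * C3) := by ring
  -- final arithmetic
  have hkey : C2 ≤ (m - 3) * C3 := by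
    have hid : (m - 4).succ * (m - 4).choose (k - 3) = (m - 4).succ.choose (k - 3).succ * (k - 3).succ := Nat.add_one_mul_choose_eq (m - 4) (k - 3)
    have e1 : Nat.succ (m - 4) = m - 3 := by omega
    have e2 : Nat.succ (k - 3) = k - 2 := by omega
    rw [e1, e2] at hid
    calc C2 = C2 * 1 := (mul_one C2).symm
      _ ≤ C2 * (k - 2) := Nat.mul_le_mul_left _ (by omega)
      _ = (m - 3) * C3 := hid.symm
  have hbound : n * d * C2 ≤ n ^ 2 * C3 := by
    calc n * d * C2 ≤ n * d * ((m - 3) * C3) := Nat.mul_le_mul_left _ hkey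
      _ ≤ n * d * (m * C3) := Nat.mul_le_mul_left _ (Nat.mul_le_mul_right _ (by omega))
      _ = n ^ 2 * C3 := by rw [hnm]; ring
  omega
end
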